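/- Every map of symmetric spectra belonging to cof(FK), where K is the set of generating trivial cofibrations of the stable model structure on sequential spectra and F is the free symmetric spectrum functor, is a levelwise monomorphism of simplicial sets. -/

import Mathlib

open CategoryTheory CategoryTheory.Limits Simplicial Opposite

namespace SpectraFormal

def KanFibration {X Y : SSet} (f : X ⟶ Y) : Prop :=
  ∀ (n : ℕ) (i : Fin (n + 2)), HasLiftingProperty (SSet.horn (n + 1) i).ι f

def TrivialKanFibration {X Y : SSet} (f : X ⟶ Y) : Prop :=
  ∀ n : ℕ, HasLiftingProperty (SSet.boundary n).ι f

def Anodyne {X Y : SSet} (f : X ⟶ Y) : Prop :=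
  ∀ {A B : SSet} (g : A ⟶ B), KanFibration g → HasLiftingProperty f g

/-- The horn-filling condition `SSet.KanComplex` of the older Mathlib: every map
`Λ[n, i] ⟶ S` (for all `n` and all `i ≤ n`) extends along the horn inclusion. -/
def OldKanComplex (S : SSet.{0}) : Prop :=
  ∀ ⦃n : ℕ⦄ ⦃i : Fin (n + 1)⦄ (σ₀ : (Λ[n, i] : SSet.{0}) ⟶ S),
    ∃ σ : Δ[n] ⟶ S, σ₀ = (SSet.horn n i).ι ≫ σ

def WeakEquiv {X Y : SSet} (f : X ⟶ Y) : Prop :=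
  ∃ (Z : SSet) (i : X ⟶ Z) (p : Z ⟶ Y), Anodyne i ∧ TrivialKanFibration p ∧ i ≫ p = f

/-! ### Pointed simplicial sets -/

/-- A pointed simplicial set: a simplicial set together with a natural basepoint
(equivalently, a map from the terminal simplicial set). -/
structure PSSet : Type 1 where
  X : SSet.{0}
  pt : ∀ m, X.obj m
  pt_nat : ∀ {m m'} (g : m ⟶ m'), X.map g (pt m) = pt m'

/-- The type of "interval coordinates" in simplicial degree `m`: the `m`-simplices of the
standard `1`-simplex `Δ[1]`, encoded as morphisms of the simplex category. -/
abbrev ICoord (m : SimplexCategoryᵒᵖ) : Type := m.unop ⟶ SimplexCategory.mk 1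

/-- The two constant interval coordinates (the images of the two endpoints of `Δ[1]`). -/
abbrev iconst (m : SimplexCategoryᵒᵖ) (v : Fin 2) : ICoord m := SimplexCategory.const _ _ v

/-! ### Sequential spectra

A sequential spectrum is a sequence of pointed simplicial sets `X n` together with
bonding maps `X n ∧ S¹ → X (n+1)`, where `S¹ = Δ[1]/∂Δ[1]` is the simplicial circle.
We encode a map `X n ∧ S¹ ⟶ Y` faithfully as a natural family
`(X n).obj m × Δ[1].obj m → Y.obj m` which collapses the wedge
`X n × ∂Δ[1] ∪ {pt} × Δ[1]` to the basepoint; this is exactly the universal property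
of the smash product with the quotient circle `Δ[1]/∂Δ[1]`. -/
structure SeqSpectrum : Type 1 where
  lvl : ℕ → PSSet
  bond : ∀ (n : ℕ) (m : SimplexCategoryᵒᵖ), (lvl n).X.obj m → ICoord m → (lvl (n + 1)).X.obj m
  bond_nat : ∀ (n : ℕ) {m m'} (g : m ⟶ m') (x : (lvl n).X.obj m) (t : ICoord m),
    (lvl (n + 1)).X.map g (bond n m x t) = bond n m' ((lvl n).X.map g x) (g.unop ≫ t)
  bond_pt : ∀ n m (t : ICoord m), bond n m ((lvl n).pt m) t = (lvl (n + 1)).pt m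
  bond_const : ∀ n m (x : (lvl n).X.obj m) (v : Fin 2),
    bond n m x (iconst m v) = (lvl (n + 1)).pt m

/-- Morphisms of sequential spectra: levelwise maps of simplicial sets which preserve the
basepoints and commute with the bonding maps. -/
@[ext]
structure SeqHom (Xs Ys : SeqSpectrum) where
  app : ∀ n, (Xs.lvl n).X ⟶ (Ys.lvl n).X
  app_pt : ∀ n m, (app n).app m ((Xs.lvl n).pt m) = (Ys.lvl n).pt m
  app_bond : ∀ n m (x : (Xs.lvl n).X.obj m) (t : ICoord m),
    (app (n + 1)).app m (Xs.bond n m x t) = Ys.bond n m ((app n).app m x) t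

instance : Category SeqSpectrum where
  Hom := SeqHom
  id Xs := ⟨fun _ => 𝟙 _, fun _ _ => rfl, fun _ _ _ _ => rfl⟩
  comp {X Y Z} f g := ⟨fun n => f.app n ≫ g.app n,
    fun n m => by
      change (g.app n).app m ((f.app n).app m _) = _
      rw [f.app_pt, g.app_pt],
    fun n m x t => by
      change (g.app (n + 1)).app m ((f.app (n + 1)).app m _) = _
      rw [f.app_bond, g.app_bond]
      rfl⟩
  id_comp f := by apply SeqHom.ext; funext n; simp
  comp_id f := by apply SeqHom.ext; funext n; simp
  assoc f g h := by apply SeqHom.ext; funext n; simp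

@[simp] lemma seq_id_app (Xs : SeqSpectrum) (n : ℕ) :
    SeqHom.app (𝟙 Xs) n = 𝟙 (Xs.lvl n).X := rfl

@[simp] lemma seq_comp_app {Xs Ys Zs : SeqSpectrum} (f : Xs ⟶ Ys) (g : Ys ⟶ Zs) (n : ℕ) :
    SeqHom.app (f ≫ g) n = SeqHom.app f n ≫ SeqHom.app g n := rfl

/-! ### Level classes of maps and objects -/

/-- A level weak equivalence of sequential spectra. -/
def LevelWE {Xs Ys : SeqSpectrum} (f : Xs ⟶ Ys) : Prop := ∀ n, WeakEquiv (SeqHom.app f n)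

/-- A level (Kan) fibration of sequential spectra. -/
def LevelFib {Xs Ys : SeqSpectrum} (f : Xs ⟶ Ys) : Prop := ∀ n, KanFibration (SeqHom.app f n)

/-- A level trivial fibration of sequential spectra. -/
def LevelTrivFib {Xs Ys : SeqSpectrum} (f : Xs ⟶ Ys) : Prop :=
  ∀ n, TrivialKanFibration (SeqHom.app f n)

/-- A levelwise monomorphism of sequential spectra. -/
def LevelMono {Xs Ys : SeqSpectrum} (f : Xs ⟶ Ys) : Prop :=
  ∀ n m, Function.Injective ((SeqHom.app f n).app m)

/-- A levelwise Kan spectrum. -/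
def LevelKan (Xs : SeqSpectrum) : Prop := ∀ n, OldKanComplex (Xs.lvl n).X


/-! ### The loop space and `Ω`-spectra -/

/-- The pointed loop space of a pointed simplicial set: in degree `m` it consists of the
maps `Δ[m] × Δ[1] ⟶ X` collapsing `Δ[m] × ∂Δ[1]` to the basepoint (i.e. maps
`Δ[m]₊ ∧ S¹ → X`). -/
def Loops (P : PSSet) : SSet.{0} where
  obj m := {φ : ∀ (k : SimplexCategoryᵒᵖ), (k.unop ⟶ m.unop) × ICoord k → P.X.obj k //
    (∀ {k k'} (g : k ⟶ k') (a : k.unop ⟶ m.unop) (t : ICoord k),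
      P.X.map g (φ k (a, t)) = φ k' (g.unop ≫ a, g.unop ≫ t)) ∧
    (∀ (k : SimplexCategoryᵒᵖ) (a : k.unop ⟶ m.unop) (v : Fin 2),
      φ k (a, iconst k v) = P.pt k)}
  map {m m'} g := TypeCat.ofHom fun φ => ⟨fun k p => φ.1 k (p.1 ≫ g.unop, p.2),
    ⟨fun g' a t => by
      dsimp only
      rw [φ.2.1 g' (a ≫ g.unop) t, Category.assoc],
     fun k a v => φ.2.2 k (a ≫ g.unop) v⟩⟩
  map_id m := by
    ext φ : 3
    apply Subtype.ext
    funext k p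
    simp
  map_comp {m m' m''} g h := by
    ext φ : 3
    apply Subtype.ext
    funext k p
    simp

/-- The adjoint bonding map `X n ⟶ Ω X (n+1)` of a sequential spectrum. -/
def adjBond (Xs : SeqSpectrum) (n : ℕ) : (Xs.lvl n).X ⟶ Loops (Xs.lvl (n + 1)) where
  app m := TypeCat.ofHom fun x => ⟨fun k p => Xs.bond n k ((Xs.lvl n).X.map p.1.op x) p.2,
    ⟨fun {k k'} g a t => by
      rw [Xs.bond_nat, ← FunctorToTypes.map_comp_apply]
      rfl,
     fun k a v => Xs.bond_const n k _ v⟩⟩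
  naturality {m m'} g := by
    ext x : 3
    apply Subtype.ext
    funext k p
    change Xs.bond n k ((Xs.lvl n).X.map p.1.op ((Xs.lvl n).X.map g x)) p.2 = _
    rw [← FunctorToTypes.map_comp_apply]
    rfl

/-- An `Ω`-spectrum: a sequential spectrum which is levelwise a Kan complex and whose
adjoint bonding maps `X n ⟶ Ω X (n+1)` are weak equivalences. -/
def OmegaSpectrum (Xs : SeqSpectrum) : Prop :=
  LevelKan Xs ∧ ∀ n, WeakEquiv (adjBond Xs n)

/-! ### Stable homotopy groups

We define the stable homotopy groups of a sequential spectrum combinatorially: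
`π_k(X) = colim_n [S^{k+n}, X n]`, where `S^j = (Δ[1]/∂Δ[1])^{∧ j}` is the simplicial
`j`-sphere and the colimit is taken along the suspension maps induced by the bonding
maps.  A pointed map `S^j → P` is encoded faithfully as a natural family
`(Δ[1]^{×j})_m → P_m` which collapses the fat wedge (all tuples with some constant
coordinate) to the basepoint.  This computes the genuine stable homotopy groups for
levelwise Kan spectra, and `PiStarIso` below passes to levelwise Kan replacements first
(i.e. stable homotopy groups are "computed after fibrant replacement of the levels"). -/

/-- The `m`-simplices of the `j`-fold product `Δ[1]^{×j}`. -/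
abbrev Cube (j : ℕ) (m : SimplexCategoryᵒᵖ) : Type := Fin j → ICoord m

/-- A pointed map `S^j → P` from the simplicial `j`-sphere `(Δ[1]/∂Δ[1])^{∧ j}`. -/
@[ext]
structure SphereMap (j : ℕ) (P : PSSet) where
  φ : ∀ m, Cube j m → P.X.obj m
  nat : ∀ {m m'} (g : m ⟶ m') (c : Cube j m),
    P.X.map g (φ m c) = φ m' (fun i => g.unop ≫ c i)
  collapse : ∀ m (c : Cube j m), (∃ i v, c i = iconst m v) → φ m c = P.pt m

/-- (Pointed, simplicial) homotopy of sphere maps. -/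
def SphereHomotopic {j : ℕ} {P : PSSet} (a b : SphereMap j P) : Prop :=
  ∃ H : ∀ m, Cube j m → ICoord m → P.X.obj m,
    (∀ {m m'} (g : m ⟶ m') (c : Cube j m) (t : ICoord m),
      P.X.map g (H m c t) = H m' (fun i => g.unop ≫ c i) (g.unop ≫ t)) ∧
    (∀ m (c : Cube j m) (t : ICoord m), (∃ i v, c i = iconst m v) → H m c t = P.pt m) ∧
    (∀ m (c : Cube j m), H m c (iconst m 0) = a.φ m c) ∧
    (∀ m (c : Cube j m), H m c (iconst m 1) = b.φ m c)

/-- Pushing a sphere map forward along a pointed map of pointed simplicial sets. -/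
def SphereMap.push {j : ℕ} {P Q : PSSet} (f : P.X ⟶ Q.X)
    (hf : ∀ m, f.app m (P.pt m) = Q.pt m) (s : SphereMap j P) : SphereMap j Q where
  φ m c := f.app m (s.φ m c)
  nat {m m'} g c := by
    dsimp only
    rw [← s.nat g c]
    exact (NatTrans.naturality_apply f g (s.φ m c)).symm
  collapse m c h := by dsimp only; rw [s.collapse m c h, hf]

/-- The suspension `S^{j+1} → X (n+1)` of a sphere map `S^j → X n`, using the bonding map
of the spectrum. -/
def suspend (Xs : SeqSpectrum) {n j : ℕ} (s : SphereMap j (Xs.lvl n)) :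
    SphereMap (j + 1) (Xs.lvl (n + 1)) where
  φ m c := Xs.bond n m (s.φ m (fun i => c i.castSucc)) (c (Fin.last j))
  nat {m m'} g c := by rw [Xs.bond_nat, s.nat g]
  collapse m c := by
    rintro ⟨i, v, hiv⟩
    induction i using Fin.lastCases with
    | last => rw [hiv, Xs.bond_const]
    | cast i' => rw [s.collapse m _ ⟨i', v, hiv⟩, Xs.bond_pt]

/-- An element of the stable homotopy group `π_k` of a sequential spectrum: a sphere map
`S^j → X n` with `j = k + n`. -/
structure StableElt (k : ℤ) (Xs : SeqSpectrum) : Type 1 where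
  n : ℕ
  j : ℕ
  hj : (j : ℤ) = k + n
  s : SphereMap j (Xs.lvl n)

/-- The relation generating the stable homotopy group `π_k` as a colimit of homotopy
classes of sphere maps along the suspension maps. -/
inductive StableRel (k : ℤ) (Xs : SeqSpectrum) : StableElt k Xs → StableElt k Xs → Prop where
  | homotopic {n j : ℕ} (hj : (j : ℤ) = k + n) {s s' : SphereMap j (Xs.lvl n)}
      (h : SphereHomotopic s s') : StableRel k Xs ⟨n, j, hj, s⟩ ⟨n, j, hj, s'⟩
  /-- The suspension relation. -/
  | suspend {n j : ℕ} (hj : (j : ℤ) = k + n) (hj' : ((j : ℤ) + 1) = k + (n + 1))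
      (s : SphereMap j (Xs.lvl n)) :
      StableRel k Xs ⟨n, j, hj, s⟩ ⟨n + 1, j + 1, by exact_mod_cast hj', suspend Xs s⟩

/-- The `k`-th stable homotopy group (as a set) of a sequential spectrum. -/
def StablePi (k : ℤ) (Xs : SeqSpectrum) : Type 1 := Quot (StableRel k Xs)

lemma push_suspend {Xs Ys : SeqSpectrum} (f : Xs ⟶ Ys) {n j : ℕ}
    (s : SphereMap j (Xs.lvl n)) :
    (suspend Xs s).push (SeqHom.app f (n + 1)) (SeqHom.app_pt f (n + 1)) =
      suspend Ys (s.push (SeqHom.app f n) (SeqHom.app_pt f n)) := by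
  apply SphereMap.ext
  funext m c
  exact SeqHom.app_bond f n m _ _

/-- The map induced on stable homotopy groups by a map of sequential spectra. -/
def stableMap {Xs Ys : SeqSpectrum} (f : Xs ⟶ Ys) (k : ℤ) : StablePi k Xs → StablePi k Ys :=
  Quot.map
    (fun e => ⟨e.n, e.j, e.hj, e.s.push (SeqHom.app f e.n) (SeqHom.app_pt f e.n)⟩)
    (by
      rintro a b (⟨hj, h⟩ | ⟨hj, hj', s⟩)
      · refine StableRel.homotopic hj ?_
        obtain ⟨H, hnat, hcoll, h0, h1⟩ := h
        refine ⟨fun m c t => (SeqHom.app f _).app m (H m c t), ?_, ?_, ?_, ?_⟩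
        · intro m m' g c t
          dsimp only
          rw [← hnat g c t]
          exact (NatTrans.naturality_apply (SeqHom.app f _) g (H m c t)).symm
        · intro m c t hc
          dsimp only
          rw [hcoll m c t hc, SeqHom.app_pt]
        · intro m c; dsimp [SphereMap.push]; rw [h0]
        · intro m c; dsimp [SphereMap.push]; rw [h1]
      · dsimp only
        rw [push_suspend]
        exact StableRel.suspend hj hj' _)

/-- A map of sequential spectra inducing isomorphisms on all stable homotopy groups
(for levelwise Kan spectra, where the combinatorial definition is correct). -/
def PiIsoOfKan {Xs Ys : SeqSpectrum} (f : Xs ⟶ Ys) : Prop :=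
  ∀ k : ℤ, Function.Bijective (stableMap f k)

/-- A `π_*`-isomorphism of sequential spectra: a map inducing isomorphisms on all stable
homotopy groups, computed after (levelwise) fibrant replacement of the levels. -/
def PiStarIso {Xs Ys : SeqSpectrum} (f : Xs ⟶ Ys) : Prop :=
  ∃ (Xs' Ys' : SeqSpectrum) (iX : Xs ⟶ Xs') (iY : Ys ⟶ Ys') (f' : Xs' ⟶ Ys'),
    LevelWE iX ∧ LevelWE iY ∧ LevelKan Xs' ∧ LevelKan Ys' ∧
    iX ≫ f' = f ≫ iY ∧ PiIsoOfKan f'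

/-! ### Symmetric spectra -/

/-- The canonical embedding `Σ_n → Σ_{n+1}` of symmetric groups, extending a permutation
by the identity on the last element. -/
noncomputable def permExtend {n : ℕ} (π : Equiv.Perm (Fin n)) : Equiv.Perm (Fin (n + 1)) :=
  π.viaFintypeEmbedding Fin.castSuccEmb

/-- The transposition of the two last elements in `Σ_{n+2}`. -/
def permTwist (n : ℕ) : Equiv.Perm (Fin (n + 2)) :=
  Equiv.swap (Fin.castSucc (Fin.last n)) (Fin.last (n + 1))

/-- A symmetric spectrum (in the sense of Hovey–Shipley–Smith, Def. 1.2.2): a sequence of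
pointed simplicial sets `X n` with an action of the symmetric group `Σ_n` on `X n`, and
equivariant bonding maps `X n ∧ S¹ → X (n+1)`.  As for `SeqSpectrum`, the bonding map is
encoded as a natural family collapsing the wedge.  Equivariance of the iterated bonding
maps `X p ∧ S^q → X (p+q)` with respect to `Σ_p × Σ_q` is imposed on generators: each
bonding map is `Σ_n`-equivariant, and the double bonding map coequalizes the twist of the
two circle coordinates against the transposition of the two new symmetric group
coordinates. -/
structure SymSpectrum : Type 1 where
  lvl : ℕ → PSSet
  bond : ∀ (n : ℕ) (m : SimplexCategoryᵒᵖ), (lvl n).X.obj m → ICoord m → (lvl (n + 1)).X.obj m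
  bond_nat : ∀ (n : ℕ) {m m'} (g : m ⟶ m') (x : (lvl n).X.obj m) (t : ICoord m),
    (lvl (n + 1)).X.map g (bond n m x t) = bond n m' ((lvl n).X.map g x) (g.unop ≫ t)
  bond_pt : ∀ n m (t : ICoord m), bond n m ((lvl n).pt m) t = (lvl (n + 1)).pt m
  bond_const : ∀ n m (x : (lvl n).X.obj m) (v : Fin 2),
    bond n m x (iconst m v) = (lvl (n + 1)).pt m
  act : ∀ n, Equiv.Perm (Fin n) → ((lvl n).X ⟶ (lvl n).X)
  act_one : ∀ n, act n 1 = 𝟙 (lvl n).X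
  act_mul : ∀ n (π ρ : Equiv.Perm (Fin n)), act n (π * ρ) = act n ρ ≫ act n π
  act_pt : ∀ n π m, (act n π).app m ((lvl n).pt m) = (lvl n).pt m
  act_bond : ∀ n (π : Equiv.Perm (Fin n)) m (x : (lvl n).X.obj m) (t : ICoord m),
    bond n m ((act n π).app m x) t = (act (n + 1) (permExtend π)).app m (bond n m x t)
  bond_twist : ∀ n m (x : (lvl n).X.obj m) (t u : ICoord m),
    bond (n + 1) m (bond n m x t) u =
      (act (n + 2) (permTwist n)).app m (bond (n + 1) m (bond n m x u) t)

/-- Morphisms of symmetric spectra: levelwise pointed maps which commute with the bonding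
maps and are equivariant for the symmetric group actions. -/
@[ext]
structure SymHom (Xs Ys : SymSpectrum) where
  app : ∀ n, (Xs.lvl n).X ⟶ (Ys.lvl n).X
  app_pt : ∀ n m, (app n).app m ((Xs.lvl n).pt m) = (Ys.lvl n).pt m
  app_bond : ∀ n m (x : (Xs.lvl n).X.obj m) (t : ICoord m),
    (app (n + 1)).app m (Xs.bond n m x t) = Ys.bond n m ((app n).app m x) t
  app_act : ∀ n (π : Equiv.Perm (Fin n)), Xs.act n π ≫ app n = app n ≫ Ys.act n π

instance : Category SymSpectrum where
  Hom := SymHom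
  id Xs := ⟨fun _ => 𝟙 _, fun _ _ => rfl, fun _ _ _ _ => rfl, fun _ _ => by simp⟩
  comp {X Y Z} f g := ⟨fun n => f.app n ≫ g.app n,
    fun n m => by
      change (g.app n).app m ((f.app n).app m _) = _
      rw [f.app_pt, g.app_pt],
    fun n m x t => by
      change (g.app (n + 1)).app m ((f.app (n + 1)).app m _) = _
      rw [f.app_bond, g.app_bond]
      rfl,
    fun n π => by rw [← Category.assoc, f.app_act, Category.assoc, g.app_act, Category.assoc]⟩
  id_comp f := by apply SymHom.ext; funext n; simp
  comp_id f := by apply SymHom.ext; funext n; simp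
  assoc f g h := by apply SymHom.ext; funext n; simp

@[simp] lemma sym_id_app (Xs : SymSpectrum) (n : ℕ) :
    SymHom.app (𝟙 Xs) n = 𝟙 (Xs.lvl n).X := rfl

@[simp] lemma sym_comp_app {Xs Ys Zs : SymSpectrum} (f : Xs ⟶ Ys) (g : Ys ⟶ Zs) (n : ℕ) :
    SymHom.app (f ≫ g) n = SymHom.app f n ≫ SymHom.app g n := rfl

/-- The underlying sequential spectrum of a symmetric spectrum. -/
def SymSpectrum.toSeq (Xs : SymSpectrum) : SeqSpectrum where
  lvl := Xs.lvl
  bond := Xs.bond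
  bond_nat := Xs.bond_nat
  bond_pt := Xs.bond_pt
  bond_const := Xs.bond_const

/-- The forgetful functor `U` from symmetric spectra to sequential spectra. -/
def Forget : SymSpectrum ⥤ SeqSpectrum where
  obj Xs := Xs.toSeq
  map f := ⟨SymHom.app f, SymHom.app_pt f, SymHom.app_bond f⟩
  map_id _ := rfl
  map_comp _ _ := rfl

/-! ### Cotensors, mapping spaces and stable equivalences of symmetric spectra -/

lemma comp_const {x y z : SimplexCategory} (f : x ⟶ y) (i : Fin (z.len + 1)) :
    f ≫ SimplexCategory.const y z i = SimplexCategory.const x z i := by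
  apply SimplexCategory.Hom.ext
  rfl

/-- The pointed cotensor `P^{A₊}` of a pointed simplicial set by a simplicial set:
in degree `m` it is the set of maps `Δ[m] × A ⟶ P`, with the constant map as
basepoint. -/
def PSSet.cotensor (P : PSSet) (A : SSet.{0}) : PSSet where
  X :=
    { obj := fun m =>
        {φ : ∀ (k : SimplexCategoryᵒᵖ), (k.unop ⟶ m.unop) × A.obj k → P.X.obj k //
          ∀ {k k'} (g : k ⟶ k') (a : k.unop ⟶ m.unop) (α : A.obj k),
            P.X.map g (φ k (a, α)) = φ k' (g.unop ≫ a, A.map g α)}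
      map := fun {m m'} g => TypeCat.ofHom fun φ => ⟨fun k p => φ.1 k (p.1 ≫ g.unop, p.2), by
        intro k k' g' a α
        dsimp only
        rw [φ.2 g' (a ≫ g.unop) α, Category.assoc]⟩
      map_id := fun m => by
        ext φ : 3
        apply Subtype.ext
        funext k p
        simp
      map_comp := fun {m m' m''} g h => by
        ext φ : 3
        apply Subtype.ext
        funext k p
        simp }
  pt m := ⟨fun k _ => P.pt k, by
    intro k k' g a α
    dsimp only
    rw [P.pt_nat]⟩
  pt_nat g := by apply Subtype.ext; rfl

/-- The cotensor of a symmetric spectrum by a simplicial set, formed levelwise. -/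
def SymSpectrum.cotensor (Xs : SymSpectrum) (A : SSet.{0}) : SymSpectrum where
  lvl n := (Xs.lvl n).cotensor A
  bond n m φ t := ⟨fun k p => Xs.bond n k (φ.1 k p) (p.1 ≫ t), by
    intro k k' g a α
    dsimp only
    rw [Xs.bond_nat, φ.2 g a α, ← Category.assoc]⟩
  bond_nat n {m m'} g φ t := by
    apply Subtype.ext
    funext k p
    exact congrArg (Xs.bond n k _) (Category.assoc _ _ _)
  bond_pt n m t := by
    apply Subtype.ext
    funext k p
    dsimp [PSSet.cotensor]
    rw [Xs.bond_pt]
  bond_const n m φ v := by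
    apply Subtype.ext
    funext k p
    dsimp [PSSet.cotensor]
    rw [comp_const, Xs.bond_const]
  act n π :=
    { app := fun m => TypeCat.ofHom fun φ => ⟨fun k p => (Xs.act n π).app k (φ.1 k p), by
        intro k k' g a α
        dsimp only
        rw [← φ.2 g a α]
        exact (NatTrans.naturality_apply (Xs.act n π) g _).symm⟩
      naturality := fun {m m'} g => by
        ext φ : 3
        apply Subtype.ext
        funext k p
        rfl }
  act_one n := by
    apply NatTrans.ext
    funext m; ext φ : 3
    apply Subtype.ext
    funext k p
    dsimp [PSSet.cotensor]
    rw [Xs.act_one]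
    rfl
  act_mul n π ρ := by
    apply NatTrans.ext
    funext m; ext φ : 3
    apply Subtype.ext
    funext k p
    dsimp [PSSet.cotensor]
    rw [Xs.act_mul]
    rfl
  act_pt n π m := by
    apply Subtype.ext
    funext k p
    exact Xs.act_pt n π k
  act_bond n π m φ t := by
    apply Subtype.ext
    funext k p
    exact Xs.act_bond n π k _ _
  bond_twist n m φ t u := by
    apply Subtype.ext
    funext k p
    exact Xs.bond_twist n k _ _ _

/-- The map `X^A ⟶ Y^A` induced on cotensors by a map of symmetric spectra. -/
def cotensorMap {Xs Ys : SymSpectrum} (f : Xs ⟶ Ys) (A : SSet.{0}) :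
    Xs.cotensor A ⟶ Ys.cotensor A where
  app n :=
    { app := fun m => TypeCat.ofHom fun φ => ⟨fun k p => (SymHom.app f n).app k (φ.1 k p), by
        intro k k' g a α
        dsimp only
        rw [← φ.2 g a α]
        exact (NatTrans.naturality_apply (SymHom.app f n) g _).symm⟩
      naturality := fun {m m'} g => by
        ext φ : 3
        apply Subtype.ext
        funext k p
        rfl }
  app_pt n m := by
    apply Subtype.ext
    funext k p
    exact SymHom.app_pt f n k
  app_bond n m φ t := by
    apply Subtype.ext
    funext k p
    exact SymHom.app_bond f n k _ _
  app_act n π := by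
    apply NatTrans.ext
    funext m; ext φ : 3
    apply Subtype.ext
    funext k p
    exact ConcreteCategory.congr_hom (NatTrans.congr_app (SymHom.app_act f n π) k) _

/-- The map `X^B ⟶ X^A` induced on cotensors by a map of simplicial sets `A ⟶ B`. -/
def cotensorPre (Xs : SymSpectrum) {A B : SSet.{0}} (h : A ⟶ B) :
    Xs.cotensor B ⟶ Xs.cotensor A where
  app n :=
    { app := fun m => TypeCat.ofHom fun φ => ⟨fun k p => φ.1 k (p.1, h.app k p.2), by
        intro k k' g a α
        dsimp only
        rw [φ.2 g a (h.app k α)]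
        exact congrArg (fun z => φ.1 k' (g.unop ≫ a, z)) (NatTrans.naturality_apply h g α).symm⟩
      naturality := fun {m m'} g => by
        ext φ : 3
        apply Subtype.ext
        funext k p
        rfl }
  app_pt n m := by apply Subtype.ext; rfl
  app_bond n m φ t := by apply Subtype.ext; rfl
  app_act n π := by
    apply NatTrans.ext
    funext m; ext φ : 3
    apply Subtype.ext
    rfl

lemma cotensorPre_id (Xs : SymSpectrum) (A : SSet.{0}) :
    cotensorPre Xs (𝟙 A) = 𝟙 (Xs.cotensor A) := by
  apply SymHom.ext
  funext n
  apply NatTrans.ext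
  funext m; ext φ : 3
  apply Subtype.ext
  rfl

lemma cotensorPre_comp (Xs : SymSpectrum) {A B C : SSet.{0}} (h : A ⟶ B) (h' : B ⟶ C) :
    cotensorPre Xs (h ≫ h') = cotensorPre Xs h' ≫ cotensorPre Xs h := by
  apply SymHom.ext
  funext n
  apply NatTrans.ext
  funext m; ext φ : 3
  apply Subtype.ext
  rfl

/-- The simplicial mapping space `Map(X, E)` of symmetric spectra:
`Map(X,E)_m = Hom(X, E^{Δ[m]})`. -/
def MapSp (Xs Es : SymSpectrum) : SSet.{0} where
  obj m := Xs ⟶ Es.cotensor (SSet.stdSimplex.obj m.unop)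
  map {m m'} g := TypeCat.ofHom fun u => u ≫ cotensorPre Es (SSet.stdSimplex.map g.unop)
  map_id m := by
    ext u : 3
    change u ≫ cotensorPre Es (SSet.stdSimplex.map (𝟙 m.unop)) = u
    erw [CategoryTheory.Functor.map_id, cotensorPre_id, Category.comp_id]
  map_comp {m m' m''} g h := by
    ext u : 3
    change u ≫ cotensorPre Es (SSet.stdSimplex.map (h.unop ≫ g.unop)) = _
    erw [CategoryTheory.Functor.map_comp, cotensorPre_comp, ← Category.assoc]
    rfl

/-- The map `Map(Y,E) ⟶ Map(X,E)` induced by precomposition with `f : X ⟶ Y`. -/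
def mapSpPre {Xs Ys : SymSpectrum} (f : Xs ⟶ Ys) (Es : SymSpectrum) :
    MapSp Ys Es ⟶ MapSp Xs Es where
  app m := TypeCat.ofHom fun u => f ≫ u
  naturality {m m'} g := by
    ext u : 3
    change f ≫ (u ≫ _) = (f ≫ u) ≫ _
    exact (Category.assoc _ _ _).symm

/-- An injective symmetric spectrum: one with the extension property along all maps
which are levelwise monomorphisms and level weak equivalences
(Hovey–Shipley–Smith, Definition 3.1.1). -/
def IsInjectiveSpectrum (Es : SymSpectrum) : Prop :=
  ∀ {As Bs : SymSpectrum} (i : As ⟶ Bs),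
    (∀ n m, Function.Injective ((SymHom.app i n).app m)) →
    (∀ n, WeakEquiv (SymHom.app i n)) →
    ∀ u : As ⟶ Es, ∃ v : Bs ⟶ Es, i ≫ v = u

/-- A symmetric spectrum whose underlying sequential spectrum is a levelwise Kan
`Ω`-spectrum. -/
def OmegaKanSym (Es : SymSpectrum) : Prop := OmegaSpectrum (Forget.obj Es)

/-- A stable equivalence of symmetric spectra: a map `f : X ⟶ Y` such that
`f^* : Map(Y,E) ⟶ Map(X,E)` is a weak equivalence of simplicial sets for every
injective `Ω`-spectrum `E`. -/
def StableEquiv {Xs Ys : SymSpectrum} (f : Xs ⟶ Ys) : Prop :=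
  ∀ Es : SymSpectrum, IsInjectiveSpectrum Es → OmegaKanSym Es → WeakEquiv (mapSpPre f Es)

/-! ### Products of symmetric spectra and the cotensor path object -/

/-- The levelwise product of pointed simplicial sets. -/
def PSSet.prod (P Q : PSSet) : PSSet where
  X :=
    { obj := fun m => P.X.obj m × Q.X.obj m
      map := fun g => TypeCat.ofHom fun p => (P.X.map g p.1, Q.X.map g p.2)
      map_id := fun m => by ext p : 3; simp
      map_comp := fun g h => by ext p : 3; simp }
  pt m := (P.pt m, Q.pt m)
  pt_nat g := Prod.ext (P.pt_nat g) (Q.pt_nat g)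

/-- The levelwise product of symmetric spectra. -/
def SymSpectrum.prod (Xs Ys : SymSpectrum) : SymSpectrum where
  lvl n := (Xs.lvl n).prod (Ys.lvl n)
  bond n m p t := (Xs.bond n m p.1 t, Ys.bond n m p.2 t)
  bond_nat n {m m'} g p t := by
    exact Prod.ext (Xs.bond_nat n g _ _) (Ys.bond_nat n g _ _)
  bond_pt n m t := by dsimp [PSSet.prod]; rw [Xs.bond_pt, Ys.bond_pt]
  bond_const n m p v := by dsimp [PSSet.prod]; rw [Xs.bond_const, Ys.bond_const]
  act n π :=
    { app := fun m => TypeCat.ofHom fun p => ((Xs.act n π).app m p.1, (Ys.act n π).app m p.2)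
      naturality := fun {m m'} g => by
        refine ConcreteCategory.hom_ext _ _ fun (p : (Xs.lvl n).X.obj m × (Ys.lvl n).X.obj m) => ?_
        have h1 := NatTrans.naturality_apply (Xs.act n π) g p.1
        have h2 := NatTrans.naturality_apply (Ys.act n π) g p.2
        exact Prod.ext h1 h2 }
  act_one n := by
    apply NatTrans.ext
    funext m; ext p : 3
    dsimp [PSSet.prod]
    rw [Xs.act_one, Ys.act_one]
    rfl
  act_mul n π ρ := by
    apply NatTrans.ext
    funext m; ext p : 3
    dsimp [PSSet.prod]
    rw [Xs.act_mul, Ys.act_mul]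
    rfl
  act_pt n π m := Prod.ext (Xs.act_pt n π m) (Ys.act_pt n π m)
  act_bond n π m p t := Prod.ext (Xs.act_bond n π m _ _) (Ys.act_bond n π m _ _)
  bond_twist n m p t u := by
    exact Prod.ext (Xs.bond_twist n m _ _ _) (Ys.bond_twist n m _ _ _)

/-- First projection from the product of symmetric spectra. -/
def prodFst {Xs Ys : SymSpectrum} : Xs.prod Ys ⟶ Xs where
  app n := { app := fun m => TypeCat.ofHom fun p => p.1, naturality := fun {m m'} g => rfl }
  app_pt n m := rfl
  app_bond n m p t := rfl
  app_act n π := rfl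

/-- Second projection from the product of symmetric spectra. -/
def prodSnd {Xs Ys : SymSpectrum} : Xs.prod Ys ⟶ Ys where
  app n := { app := fun m => TypeCat.ofHom fun p => p.2, naturality := fun {m m'} g => rfl }
  app_pt n m := rfl
  app_bond n m p t := rfl
  app_act n π := rfl

/-- Pairing of maps into the product of symmetric spectra. -/
def prodLift {Zs Xs Ys : SymSpectrum} (f : Zs ⟶ Xs) (g : Zs ⟶ Ys) : Zs ⟶ Xs.prod Ys where
  app n :=
    { app := fun m => TypeCat.ofHom fun z => ((SymHom.app f n).app m z, (SymHom.app g n).app m z)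
      naturality := fun {m m'} h => by
        refine ConcreteCategory.hom_ext _ _ fun z => ?_
        have h1 := NatTrans.naturality_apply (SymHom.app f n) h z
        have h2 := NatTrans.naturality_apply (SymHom.app g n) h z
        exact Prod.ext h1 h2 }
  app_pt n m := by
    exact Prod.ext (SymHom.app_pt f n m) (SymHom.app_pt g n m)
  app_bond n m z t := by
    exact Prod.ext (SymHom.app_bond f n m _ _) (SymHom.app_bond g n m _ _)
  app_act n π := by
    apply NatTrans.ext
    funext m; ext z : 3
    have h1 := ConcreteCategory.congr_hom (NatTrans.congr_app (SymHom.app_act f n π) m) z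
    have h2 := ConcreteCategory.congr_hom (NatTrans.congr_app (SymHom.app_act g n π) m) z
    exact Prod.ext h1 h2

noncomputable instance (Xs Ys : SymSpectrum) :
    Limits.HasLimit (Limits.pair Xs Ys) :=
  Limits.HasLimit.mk
    { cone := Limits.BinaryFan.mk (prodFst (Xs := Xs) (Ys := Ys)) prodSnd
      isLimit := Limits.BinaryFan.isLimitMk
        (fun s => prodLift s.fst s.snd)
        (fun s => by apply SymHom.ext; funext n; apply NatTrans.ext; funext m; rfl)
        (fun s => by apply SymHom.ext; funext n; apply NatTrans.ext; funext m; rfl)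
        (fun s u h1 h2 => by
          apply SymHom.ext
          funext n
          apply NatTrans.ext
          funext m
          ext z : 3
          have e1 := ConcreteCategory.congr_hom (NatTrans.congr_app
            (congrArg (fun w => SymHom.app w n) h1) m) z
          have e2 := ConcreteCategory.congr_hom (NatTrans.congr_app
            (congrArg (fun w => SymHom.app w n) h2) m) z
          exact Prod.ext e1 e2) }

noncomputable instance : Limits.HasBinaryProducts SymSpectrum :=
  Limits.hasBinaryProducts_of_hasLimit_pair _

/-- The "constant path" map `X ⟶ X^{Δ[1]}`; it is the composite of the canonical
isomorphism `X ≅ X^{Δ[0]}` with the cotensor of the unique map `Δ[1] ⟶ Δ[0]`. -/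
def pathIn (Xs : SymSpectrum) : Xs ⟶ Xs.cotensor Δ[1] where
  app n :=
    { app := fun m => TypeCat.ofHom fun x => ⟨fun k p => (Xs.lvl n).X.map p.1.op x, by
        intro k k' g a α
        dsimp only
        rw [← FunctorToTypes.map_comp_apply]
        rfl⟩
      naturality := fun {m m'} g => by
        ext x : 3
        apply Subtype.ext
        funext k p
        change (Xs.lvl n).X.map p.1.op ((Xs.lvl n).X.map g x) =
          (Xs.lvl n).X.map (p.1 ≫ g.unop).op x
        rw [← FunctorToTypes.map_comp_apply]
        rfl }
  app_pt n m := by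
    apply Subtype.ext
    funext k p
    exact (Xs.lvl n).pt_nat _
  app_bond n m x t := by
    apply Subtype.ext
    funext k p
    exact Xs.bond_nat n p.1.op x t
  app_act n π := by
    apply NatTrans.ext
    funext m; ext x : 3
    apply Subtype.ext
    funext k p
    change (Xs.lvl n).X.map p.1.op ((Xs.act n π).app m x) =
      (Xs.act n π).app k ((Xs.lvl n).X.map p.1.op x)
    exact (NatTrans.naturality_apply (Xs.act n π) p.1.op x).symm

/-- Evaluation of the path object `X^{Δ[1]}` at one of the two vertices of `Δ[1]`;
the pair of these maps is the map `X^{Δ[1]} ⟶ X^{∂Δ[1]} ≅ X × X`. -/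
def pathEv (Xs : SymSpectrum) (v : Fin 2) : Xs.cotensor Δ[1] ⟶ Xs where
  app n :=
    { app := fun m => TypeCat.ofHom fun φ => φ.1 m (𝟙 m.unop, SSet.stdSimplex.const 1 v m)
      naturality := fun {m m'} g => by
        ext φ : 3
        change φ.1 m' (𝟙 m'.unop ≫ g.unop, SSet.stdSimplex.const 1 v m') =
          (Xs.lvl n).X.map g (φ.1 m (𝟙 m.unop, SSet.stdSimplex.const 1 v m))
        rw [φ.2 g (𝟙 m.unop) (SSet.stdSimplex.const 1 v m)]
        refine congrArg (φ.1 m') (Prod.ext ?_ ?_)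
        · simp
        · rfl }
  app_pt n m := rfl
  app_bond n m φ t := by
    change Xs.bond n m (φ.1 m (𝟙 m.unop, SSet.stdSimplex.const 1 v m)) (𝟙 m.unop ≫ t) = _
    rw [Category.id_comp]
    rfl
  app_act n π := by
    apply NatTrans.ext
    funext m; ext φ : 3
    rfl

/-! ### Model structures, cofibrant generation, local presentability -/

section ModelStructures

universe w v₂ u₂ v₁ u₁

variable {C : Type u₁} [Category.{v₁} C]

/-- A class of morphisms is closed under retracts. -/
def RetractClosed (P : MorphismProperty C) : Prop :=
  ∀ {X Y X' Y' : C} (f : X ⟶ Y) (g : X' ⟶ Y') (iX : X ⟶ X') (iY : Y ⟶ Y')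
    (rX : X' ⟶ X) (rY : Y' ⟶ Y),
    iX ≫ rX = 𝟙 X → iY ≫ rY = 𝟙 Y → iX ≫ g = f ≫ iY → g ≫ rY = rX ≫ f → P g → P f

/-- A model structure on a category `C`: classes of weak equivalences, cofibrations and
fibrations satisfying the two-out-of-three, retract, lifting and factorization axioms
(the trivial (co)fibrations being the (co)fibrations which are weak equivalences). -/
structure ModelStr (C : Type u₁) [Category.{v₁} C] : Type (max u₁ v₁) where
  W : MorphismProperty C
  Cof : MorphismProperty C
  Fib : MorphismProperty C
  w_id : ∀ X : C, W (𝟙 X)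
  w_comp : ∀ {X Y Z} (f : X ⟶ Y) (g : Y ⟶ Z), W f → W g → W (f ≫ g)
  w_of_comp_left : ∀ {X Y Z} (f : X ⟶ Y) (g : Y ⟶ Z), W g → W (f ≫ g) → W f
  w_of_comp_right : ∀ {X Y Z} (f : X ⟶ Y) (g : Y ⟶ Z), W f → W (f ≫ g) → W g
  w_retract : RetractClosed W
  cof_retract : RetractClosed Cof
  fib_retract : RetractClosed Fib
  lift_trivCof_fib : ∀ {A B X Y} (i : A ⟶ B) (p : X ⟶ Y),
    Cof i → W i → Fib p → HasLiftingProperty i p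
  lift_cof_trivFib : ∀ {A B X Y} (i : A ⟶ B) (p : X ⟶ Y),
    Cof i → Fib p → W p → HasLiftingProperty i p
  fact_trivCof_fib : ∀ {X Y} (f : X ⟶ Y),
    ∃ (Z : C) (i : X ⟶ Z) (p : Z ⟶ Y), Cof i ∧ W i ∧ Fib p ∧ i ≫ p = f
  fact_cof_trivFib : ∀ {X Y} (f : X ⟶ Y),
    ∃ (Z : C) (i : X ⟶ Z) (p : Z ⟶ Y), Cof i ∧ Fib p ∧ W p ∧ i ≫ p = f

/-- An object `X` is fibrant precisely when it has the extension property along all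
trivial cofibrations (equivalently, `X → 1` is a fibration). -/
def ModelStr.FibrantObj (ms : ModelStr C) (X : C) : Prop :=
  ∀ {A B : C} (i : A ⟶ B), ms.Cof i → ms.W i → ∀ u : A ⟶ X, ∃ v : B ⟶ X, i ≫ v = u

/-- An object `X` is cofibrant precisely when it has the lifting property against all
trivial fibrations (equivalently, `0 → X` is a cofibration). -/
def ModelStr.CofibrantObj (ms : ModelStr C) (X : C) : Prop :=
  ∀ {A B : C} (p : A ⟶ B), ms.Fib p → ms.W p → ∀ u : X ⟶ B, ∃ v : X ⟶ A, v ≫ p = u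

/-- The family `K` is a set of generating trivial cofibrations for `ms`: its members are
trivial cofibrations, and a map has the right lifting property against all of them
if and only if it is a fibration. -/
def ModelStr.GeneratesTrivCof (ms : ModelStr C) {ι : Type w} {A B : ι → C}
    (K : ∀ i, A i ⟶ B i) : Prop :=
  (∀ i, ms.Cof (K i) ∧ ms.W (K i)) ∧
  ∀ {X Y : C} (f : X ⟶ Y), (∀ i, HasLiftingProperty (K i) f) ↔ ms.Fib f

/-- The family `I` is a set of generating cofibrations for `ms`: its members are
cofibrations, and a map has the right lifting property against all of them if and only
if it is a trivial fibration. -/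
def ModelStr.GeneratesCof (ms : ModelStr C) {ι : Type w} {A B : ι → C}
    (I : ∀ i, A i ⟶ B i) : Prop :=
  (∀ i, ms.Cof (I i)) ∧
  ∀ {X Y : C} (f : X ⟶ Y), (∀ i, HasLiftingProperty (I i) f) ↔ (ms.Fib f ∧ ms.W f)

/-- A model structure is cofibrantly generated if it admits a set of generating
cofibrations and a set of generating trivial cofibrations. -/
def ModelStr.IsCofibrantlyGenerated (ms : ModelStr C) : Prop :=
  (∃ (ι : Type v₁) (A B : ι → C) (I : ∀ i, A i ⟶ B i), ms.GeneratesCof I) ∧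
  (∃ (ι : Type v₁) (A B : ι → C) (K : ∀ i, A i ⟶ B i), ms.GeneratesTrivCof K)

/-- A category `J` is `κ`-filtered if every diagram in `J` of size `< κ` admits a
cocone. -/
def CardinalFiltered (κ : Cardinal.{v₁}) (J : Type v₁) [SmallCategory J] : Prop :=
  ∀ (K : Type v₁) [SmallCategory K], Cardinal.mk (Σ (a b : K), a ⟶ b) < κ →
    ∀ D : K ⥤ J, Nonempty (Limits.Cocone D)

/-- An object `X` is `κ`-presentable if its covariant hom-functor preserves colimits of
`κ`-filtered diagrams. -/
def IsPresentableObj (κ : Cardinal.{v₁}) (X : C) : Prop :=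
  ∀ (J : Type v₁) (instJ : SmallCategory J), @CardinalFiltered κ J instJ →
    ∀ (D : @CategoryTheory.Functor J instJ C _) (c : Limits.Cocone D),
      Nonempty (Limits.IsColimit c) →
      Nonempty (Limits.IsColimit ((coyoneda.obj (op X)).mapCocone c))

/-- A presentation of an object `X` as a `κ`-filtered colimit of objects from a family
`G` of generators. -/
structure FilteredColimPresentation (κ : Cardinal.{v₁}) {ι : Type v₁} (G : ι → C)
    (X : C) : Type (max u₁ (v₁ + 1)) where
  J : Type v₁
  [instJ : SmallCategory J]
  filtered : CardinalFiltered κ J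
  D : J ⥤ C
  inGens : ∀ j : J, ∃ i, Nonempty (D.obj j ≅ G i)
  c : Limits.Cocone D
  isColim : Limits.IsColimit c
  iso : c.pt ≅ X

attribute [instance] FilteredColimPresentation.instJ

/-- A category is locally presentable if it is complete and cocomplete and there is a
regular cardinal `κ` and a set of `κ`-presentable objects such that every object is a
`κ`-filtered colimit of objects from this set. -/
def LocallyPresentable (C : Type u₁) [Category.{v₁} C] : Prop :=
  Limits.HasLimitsOfSize.{v₁, v₁} C ∧ Limits.HasColimitsOfSize.{v₁, v₁} C ∧
  ∃ (κ : Cardinal.{v₁}), κ.IsRegular ∧ ∃ (ι : Type v₁) (G : ι → C),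
    (∀ i, IsPresentableObj κ (G i)) ∧
    ∀ X : C, Nonempty (FilteredColimPresentation κ G X)

/-- A combinatorial model category: a cofibrantly generated model structure on a locally
presentable category. -/
def ModelStr.IsCombinatorial (ms : ModelStr C) : Prop :=
  LocallyPresentable C ∧ ms.IsCofibrantlyGenerated

end ModelStructures

section Transfer

universe w v₂ u₂ v₁ u₁

variable {M : Type u₁} [Category.{v₁} M] {C : Type u₂} [Category.{v₂} C]

/-- Membership in `cof(F K)`, the left class of the weak factorization system on `C`
generated by the image under `F` of the family `K` (equivalently, the closure of `F K`
under pushouts, transfinite composition and retracts): a map is in `cof(F K)` iff it has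
the left lifting property against every map having the right lifting property against
all `F (K i)`. -/
def CofOfImage (F : M ⥤ C) {ι : Type w} {A B : ι → M} (K : ∀ i, A i ⟶ B i)
    {X Y : C} (f : X ⟶ Y) : Prop :=
  ∀ {P Q : C} (g : P ⟶ Q), (∀ i, HasLiftingProperty (F.map (K i)) g) →
    HasLiftingProperty f g

/-- Condition (1) of the fibrant transfer theorem [fibrantMS, Theorem 3.5] for an
adjunction `F ⊣ U` with `U : C ⥤ M`: every map `f` with `U f` a trivial fibration embeds
into a commutative square whose vertical maps lie in `cof(F K)`, whose lower corners are
sent by `U` to fibrant objects, and whose bottom map is sent by `U` to a weak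
equivalence. -/
def TransferCondOne (ms : ModelStr M) (F : M ⥤ C) (U : C ⥤ M)
    {ι : Type w} {A B : ι → M} (K : ∀ i, A i ⟶ B i) : Prop :=
  ∀ {X Y : C} (f : X ⟶ Y), ms.Fib (U.map f) → ms.W (U.map f) →
    ∃ (X' Y' : C) (iX : X ⟶ X') (iY : Y ⟶ Y') (f' : X' ⟶ Y'),
      CofOfImage F K iX ∧ CofOfImage F K iY ∧
      ms.FibrantObj (U.obj X') ∧ ms.FibrantObj (U.obj Y') ∧
      iX ≫ f' = f ≫ iY ∧ ms.W (U.map f')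

/-- Condition (2) of the fibrant transfer theorem [fibrantMS, Theorem 3.5]: every object
`X` with `U X` fibrant admits a path object, i.e. a factorization `X → Path X → X × X` of
the diagonal whose first map is sent by `U` to a weak equivalence and whose second map is
sent by `U` to a fibration. -/
def TransferCondTwo [Limits.HasBinaryProducts C] (ms : ModelStr M) (U : C ⥤ M) : Prop :=
  ∀ X : C, ms.FibrantObj (U.obj X) →
    ∃ (P : C) (w : X ⟶ P) (p : P ⟶ Limits.prod X X),
      w ≫ p = Limits.prod.lift (𝟙 X) (𝟙 X) ∧ ms.W (U.map w) ∧ ms.Fib (U.map p)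

/-- A model structure `msD` is (fibrantly) transferred from `msC` along a right adjoint
`R` when its weak equivalences and fibrations are detected by `R`. -/
def IsRightTransferred {D : Type u₁} [Category.{v₁} D] {C' : Type u₂} [Category.{v₂} C']
    (msD : ModelStr D) (msC : ModelStr C') (R : D ⥤ C') : Prop :=
  (∀ {X Y : D} (f : X ⟶ Y), msD.W f ↔ msC.W (R.map f)) ∧
  (∀ {X Y : D} (f : X ⟶ Y), msD.Fib f ↔ msC.Fib (R.map f))

/-- A Quillen adjunction: the left adjoint preserves cofibrations and trivial
cofibrations. -/
def IsQuillenAdjunction (msM : ModelStr M) (msC : ModelStr C) (F : M ⥤ C) (U : C ⥤ M)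
    (_ : F ⊣ U) : Prop :=
  (∀ {X Y : M} (f : X ⟶ Y), msM.Cof f → msC.Cof (F.map f)) ∧
  (∀ {X Y : M} (f : X ⟶ Y), msM.Cof f → msM.W f → msC.Cof (F.map f) ∧ msC.W (F.map f))

/-- A Quillen equivalence: a Quillen adjunction such that for `X` cofibrant and `Y`
fibrant, a map `F X ⟶ Y` is a weak equivalence iff its adjoint `X ⟶ U Y` is. -/
def IsQuillenEquivalence (msM : ModelStr M) (msC : ModelStr C) (F : M ⥤ C) (U : C ⥤ M)
    (adj : F ⊣ U) : Prop :=
  IsQuillenAdjunction msM msC F U adj ∧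
  ∀ (X : M) (Y : C), msM.CofibrantObj X → msC.FibrantObj Y →
    ∀ g : F.obj X ⟶ Y, (msC.W g ↔ msM.W ((adj.homEquiv X Y) g))

end Transfer

/-! ### Characterizations of the specific model structures on spectra -/

/-- `ms` is the level model structure on sequential spectra: weak equivalences,
fibrations and trivial fibrations are defined levelwise. -/
def IsLevelSeq (ms : ModelStr SeqSpectrum) : Prop :=
  (∀ {X Y : SeqSpectrum} (f : X ⟶ Y), ms.W f ↔ LevelWE f) ∧
  (∀ {X Y : SeqSpectrum} (f : X ⟶ Y), ms.Fib f ↔ LevelFib f) ∧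
  (∀ {X Y : SeqSpectrum} (f : X ⟶ Y), (ms.Fib f ∧ ms.W f) ↔ LevelTrivFib f)

/-- `ms` is the level model structure on symmetric spectra. -/
def IsLevelSym (ms : ModelStr SymSpectrum) : Prop :=
  (∀ {X Y : SymSpectrum} (f : X ⟶ Y), ms.W f ↔ LevelWE (Forget.map f)) ∧
  (∀ {X Y : SymSpectrum} (f : X ⟶ Y), ms.Fib f ↔ LevelFib (Forget.map f)) ∧
  (∀ {X Y : SymSpectrum} (f : X ⟶ Y), (ms.Fib f ∧ ms.W f) ↔ LevelTrivFib (Forget.map f))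

/-- `ms` is the stable (Bousfield–Friedlander) model structure on sequential spectra:
weak equivalences are the `π_*`-isomorphisms, fibrant objects are the levelwise Kan
`Ω`-spectra, and trivial fibrations are the level trivial fibrations. -/
def IsStableSeq (ms : ModelStr SeqSpectrum) : Prop :=
  (∀ {X Y : SeqSpectrum} (f : X ⟶ Y), ms.W f ↔ PiStarIso f) ∧
  (∀ X : SeqSpectrum, ms.FibrantObj X ↔ OmegaSpectrum X) ∧
  (∀ {X Y : SeqSpectrum} (f : X ⟶ Y), (ms.Fib f ∧ ms.W f) ↔ LevelTrivFib f)

/-- `ms` is the stable (Hovey–Shipley–Smith) model structure on symmetric spectra: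
weak equivalences are the stable equivalences, fibrant objects are the symmetric spectra
whose underlying sequential spectra are levelwise Kan `Ω`-spectra, and trivial fibrations
are the level trivial fibrations. -/
def IsStableSym (ms : ModelStr SymSpectrum) : Prop :=
  (∀ {X Y : SymSpectrum} (f : X ⟶ Y), ms.W f ↔ StableEquiv f) ∧
  (∀ X : SymSpectrum, ms.FibrantObj X ↔ OmegaKanSym X) ∧
  (∀ {X Y : SymSpectrum} (f : X ⟶ Y), (ms.Fib f ∧ ms.W f) ↔ LevelTrivFib (Forget.map f))

/-! ### Spectra of topological spaces -/

/-- A sequential spectrum of (pointed) topological spaces: a sequence of pointed spaces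
with bonding maps `X n ∧ S¹ → X (n+1)`, encoded as continuous maps
`X n × [0,1] → X (n+1)` collapsing `X n × {0,1} ∪ {pt} × [0,1]` to the basepoint
(`S¹ = [0,1]/{0,1}`). -/
structure TopSeqSpectrum : Type 1 where
  lvl : ℕ → TopCat.{0}
  pt : ∀ n, lvl n
  bond : ∀ n, C(↥(lvl n) × ↥unitInterval, ↥(lvl (n + 1)))
  bond_zero : ∀ n (x : lvl n), bond n (x, 0) = pt (n + 1)
  bond_one : ∀ n (x : lvl n), bond n (x, 1) = pt (n + 1)
  bond_pt : ∀ n (t : unitInterval), bond n (pt n, t) = pt (n + 1)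

/-- Morphisms of topological sequential spectra. -/
@[ext]
structure TopSeqHom (Xs Ys : TopSeqSpectrum) where
  app : ∀ n, Xs.lvl n ⟶ Ys.lvl n
  app_pt : ∀ n, app n (Xs.pt n) = Ys.pt n
  app_bond : ∀ n (x : Xs.lvl n) (t : unitInterval),
    app (n + 1) (Xs.bond n (x, t)) = Ys.bond n (app n x, t)

instance : Category TopSeqSpectrum where
  Hom := TopSeqHom
  id Xs := ⟨fun _ => 𝟙 _, fun _ => rfl, fun _ _ _ => rfl⟩
  comp {X Y Z} f g := ⟨fun n => f.app n ≫ g.app n,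
    fun n => by
      change g.app n (f.app n _) = _
      rw [f.app_pt, g.app_pt],
    fun n x t => by
      change g.app (n + 1) (f.app (n + 1) _) = _
      rw [f.app_bond, g.app_bond]
      rfl⟩
  id_comp f := by apply TopSeqHom.ext; funext n; simp
  comp_id f := by apply TopSeqHom.ext; funext n; simp
  assoc f g h := by apply TopSeqHom.ext; funext n; simp

/-- A symmetric spectrum of topological spaces: levels carry symmetric group actions and
the bonding maps are suitably equivariant (as in `SymSpectrum`, equivariance of the
iterated bonding maps is imposed on generators). -/
structure TopSymSpectrum : Type 1 where
  lvl : ℕ → TopCat.{0}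
  pt : ∀ n, lvl n
  bond : ∀ n, C(↥(lvl n) × ↥unitInterval, ↥(lvl (n + 1)))
  bond_zero : ∀ n (x : lvl n), bond n (x, 0) = pt (n + 1)
  bond_one : ∀ n (x : lvl n), bond n (x, 1) = pt (n + 1)
  bond_pt : ∀ n (t : unitInterval), bond n (pt n, t) = pt (n + 1)
  act : ∀ n, Equiv.Perm (Fin n) → (lvl n ⟶ lvl n)
  act_one : ∀ n, act n 1 = 𝟙 (lvl n)
  act_mul : ∀ n (π ρ : Equiv.Perm (Fin n)), act n (π * ρ) = act n ρ ≫ act n π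
  act_pt : ∀ n π, act n π (pt n) = pt n
  act_bond : ∀ n (π : Equiv.Perm (Fin n)) (x : lvl n) (t : unitInterval),
    bond n (act n π x, t) = act (n + 1) (permExtend π) (bond n (x, t))
  bond_twist : ∀ n (x : lvl n) (t u : unitInterval),
    bond (n + 1) (bond n (x, t), u) =
      act (n + 2) (permTwist n) (bond (n + 1) (bond n (x, u), t))

/-- Morphisms of topological symmetric spectra. -/
@[ext]
structure TopSymHom (Xs Ys : TopSymSpectrum) where
  app : ∀ n, Xs.lvl n ⟶ Ys.lvl n
  app_pt : ∀ n, app n (Xs.pt n) = Ys.pt n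
  app_bond : ∀ n (x : Xs.lvl n) (t : unitInterval),
    app (n + 1) (Xs.bond n (x, t)) = Ys.bond n (app n x, t)
  app_act : ∀ n (π : Equiv.Perm (Fin n)) (x : Xs.lvl n),
    app n (Xs.act n π x) = Ys.act n π (app n x)

instance : Category TopSymSpectrum where
  Hom := TopSymHom
  id Xs := ⟨fun _ => 𝟙 _, fun _ => rfl, fun _ _ _ => rfl, fun _ _ _ => rfl⟩
  comp {X Y Z} f g := ⟨fun n => f.app n ≫ g.app n,
    fun n => by
      change g.app n (f.app n _) = _
      rw [f.app_pt, g.app_pt],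
    fun n x t => by
      change g.app (n + 1) (f.app (n + 1) _) = _
      rw [f.app_bond, g.app_bond]
      rfl,
    fun n π x => by
      change g.app n (f.app n _) = _
      rw [f.app_act, g.app_act]
      rfl⟩
  id_comp f := by apply TopSymHom.ext; funext n; simp
  comp_id f := by apply TopSymHom.ext; funext n; simp
  assoc f g h := by apply TopSymHom.ext; funext n; simp

/-- The underlying topological sequential spectrum of a topological symmetric
spectrum. -/
def TopForget : TopSymSpectrum ⥤ TopSeqSpectrum where
  obj Xs := ⟨Xs.lvl, Xs.pt, Xs.bond, Xs.bond_zero, Xs.bond_one, Xs.bond_pt⟩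
  map f := ⟨f.app, f.app_pt, f.app_bond⟩
  map_id _ := rfl
  map_comp _ _ := rfl

/-- A functor from topological sequential spectra to simplicial sequential spectra "is
the levelwise singular simplicial set functor": its value on each level is the singular
simplicial set of that level. -/
def IsLevelwiseSingularSeq (R : TopSeqSpectrum ⥤ SeqSpectrum) : Prop :=
  ∃ hobj : ∀ (A : TopSeqSpectrum) (n : ℕ),
      ((R.obj A).lvl n).X = TopCat.toSSet.obj (A.lvl n),
    ∀ {A B : TopSeqSpectrum} (f : A ⟶ B) (n : ℕ),
      SeqHom.app (R.map f) n =
        eqToHom (hobj A n) ≫ TopCat.toSSet.map (TopSeqHom.app f n) ≫ eqToHom (hobj B n).symm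

/-- As `IsLevelwiseSingularSeq`, for symmetric spectra. -/
def IsLevelwiseSingularSym (R : TopSymSpectrum ⥤ SymSpectrum) : Prop :=
  ∃ hobj : ∀ (A : TopSymSpectrum) (n : ℕ),
      ((R.obj A).lvl n).X = TopCat.toSSet.obj (A.lvl n),
    ∀ {A B : TopSymSpectrum} (f : A ⟶ B) (n : ℕ),
      SymHom.app (R.map f) n =
        eqToHom (hobj A n) ≫ TopCat.toSSet.map (TopSymHom.app f n) ≫ eqToHom (hobj B n).symm

/-- A functor is "levelwise geometric realization" if it is left adjoint to a levelwise
singular functor; the realization functor on spectra is levelwise `|−|` precisely in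
this sense. -/
def IsLevelwiseRealizationSeq (L : SeqSpectrum ⥤ TopSeqSpectrum) : Prop :=
  ∃ R : TopSeqSpectrum ⥤ SeqSpectrum, IsLevelwiseSingularSeq R ∧ Nonempty (L ⊣ R)

/-! ### Cotensor of sequential spectra -/

/-- The cotensor of a sequential spectrum by a simplicial set, formed levelwise. -/
def SeqSpectrum.cotensor (Xs : SeqSpectrum) (A : SSet.{0}) : SeqSpectrum where
  lvl n := (Xs.lvl n).cotensor A
  bond n m φ t := ⟨fun k p => Xs.bond n k (φ.1 k p) (p.1 ≫ t), by
    intro k k' g a α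
    dsimp only
    rw [Xs.bond_nat, φ.2 g a α, ← Category.assoc]⟩
  bond_nat n {m m'} g φ t := by
    apply Subtype.ext
    funext k p
    exact congrArg (Xs.bond n k _) (Category.assoc _ _ _)
  bond_pt n m t := by
    apply Subtype.ext
    funext k p
    dsimp [PSSet.cotensor]
    rw [Xs.bond_pt]
  bond_const n m φ v := by
    apply Subtype.ext
    funext k p
    dsimp [PSSet.cotensor]
    rw [comp_const, Xs.bond_const]

/-- The map `X^A ⟶ Y^A` induced on cotensors by a map of sequential spectra. -/
def cotensorMapSeq {Xs Ys : SeqSpectrum} (f : Xs ⟶ Ys) (A : SSet.{0}) :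
    Xs.cotensor A ⟶ Ys.cotensor A where
  app n :=
    { app := fun m => TypeCat.ofHom fun φ => ⟨fun k p => (SeqHom.app f n).app k (φ.1 k p), by
        intro k k' g a α
        dsimp only
        rw [← φ.2 g a α]
        exact (NatTrans.naturality_apply (SeqHom.app f n) g _).symm⟩
      naturality := fun {m m'} g => by
        ext φ : 3
        apply Subtype.ext
        funext k p
        rfl }
  app_pt n m := by
    apply Subtype.ext
    funext k p
    exact SeqHom.app_pt f n k
  app_bond n m φ t := by
    apply Subtype.ext
    funext k p
    exact SeqHom.app_bond f n k _ _

/-- The map `X^B ⟶ X^A` induced on cotensors of sequential spectra by a map of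
simplicial sets `A ⟶ B`. -/
def cotensorPreSeq (Xs : SeqSpectrum) {A B : SSet.{0}} (h : A ⟶ B) :
    Xs.cotensor B ⟶ Xs.cotensor A where
  app n :=
    { app := fun m => TypeCat.ofHom fun φ => ⟨fun k p => φ.1 k (p.1, h.app k p.2), by
        intro k k' g a α
        dsimp only
        rw [φ.2 g a (h.app k α)]
        exact congrArg (fun z => φ.1 k' (g.unop ≫ a, z)) (NatTrans.naturality_apply h g α).symm⟩
      naturality := fun {m m'} g => by
        ext φ : 3
        apply Subtype.ext
        funext k p
        rfl }
  app_pt n m := by apply Subtype.ext; rfl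
  app_bond n m φ t := by apply Subtype.ext; rfl


/-! ### Auxiliary: extensions of permutations -/

/-- Extension of a permutation of `Fin a` to `Fin b` (for `a ≤ b`) by the identity. -/
noncomputable def permLE {a b : ℕ} (h : a ≤ b) (π : Equiv.Perm (Fin a)) : Equiv.Perm (Fin b) :=
  π.viaFintypeEmbedding (Fin.castLEEmb h)

lemma permLE_lt {a b : ℕ} (h : a ≤ b) (π : Equiv.Perm (Fin a)) (i : Fin b)
    (hi : (i : ℕ) < a) :
    permLE h π i = ⟨(π ⟨i, hi⟩ : Fin a), lt_of_lt_of_le (π ⟨i, hi⟩).2 h⟩ := by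
  have key := Equiv.Perm.viaFintypeEmbedding_apply_image π (Fin.castLEEmb h) ⟨(i : ℕ), hi⟩
  have e : (Fin.castLEEmb h) ⟨(i : ℕ), hi⟩ = i := Fin.ext rfl
  rw [e] at key
  rw [permLE, key]
  apply Fin.ext
  rfl

lemma permLE_ge {a b : ℕ} (h : a ≤ b) (π : Equiv.Perm (Fin a)) (i : Fin b)
    (hi : ¬ (i : ℕ) < a) :
    permLE h π i = i := by
  rw [permLE, Equiv.Perm.viaFintypeEmbedding_apply_notMem_range]
  rintro ⟨j, hj⟩
  exact hi (hj ▸ j.2)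

lemma permLE_coe_lt {a b : ℕ} (h : a ≤ b) (π : Equiv.Perm (Fin a)) (i : Fin b)
    (hi : (i : ℕ) < a) :
    ((permLE h π i : Fin b) : ℕ) = ((π ⟨i, hi⟩ : Fin a) : ℕ) := by
  rw [permLE_lt h π i hi]

lemma permLE_one {a b : ℕ} (h : a ≤ b) : permLE h (1 : Equiv.Perm (Fin a)) = 1 := by
  ext i
  by_cases hi : (i : ℕ) < a
  · rw [permLE_lt h 1 i hi]
    rfl
  · rw [permLE_ge h 1 i hi]
    rfl

lemma permLE_mul {a b : ℕ} (h : a ≤ b) (π ρ : Equiv.Perm (Fin a)) :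
    permLE h (π * ρ) = permLE h π * permLE h ρ := by
  ext i
  by_cases hi : (i : ℕ) < a
  · have h1 : (permLE h ρ i : ℕ) < a := by
      rw [permLE_coe_lt h ρ i hi]
      exact (ρ ⟨i, hi⟩).2
    have e1 : permLE h ρ i = ⟨(ρ ⟨i, hi⟩ : Fin a), lt_of_lt_of_le (ρ ⟨i, hi⟩).2 h⟩ :=
      permLE_lt h ρ i hi
    rw [Equiv.Perm.mul_apply, permLE_lt h (π * ρ) i hi, e1, permLE_lt h π _ (ρ ⟨i, hi⟩).2]
    rfl
  · rw [Equiv.Perm.mul_apply, permLE_ge h (π * ρ) i hi, permLE_ge h ρ i hi,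
      permLE_ge h π i hi]

lemma permLE_trans {a b c : ℕ} (h1 : a ≤ b) (h2 : b ≤ c) (π : Equiv.Perm (Fin a)) :
    permLE h2 (permLE h1 π) = permLE (h1.trans h2) π := by
  ext i
  by_cases hi : (i : ℕ) < a
  · have hib : (i : ℕ) < b := lt_of_lt_of_le hi h1
    have e2 : permLE h1 π ⟨(i : ℕ), hib⟩ =
        ⟨(π ⟨(i : ℕ), hi⟩ : Fin a), lt_of_lt_of_le (π ⟨(i : ℕ), hi⟩).2 h1⟩ :=
      permLE_lt h1 π _ hi
    rw [permLE_lt h2 _ i hib, permLE_lt (h1.trans h2) π i hi, e2]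
  · have hib : ¬ (i : ℕ) < b ∨ ((i : ℕ) < b ∧ ¬ (i : ℕ) < a) := by tauto
    by_cases hb : (i : ℕ) < b
    · rw [permLE_lt h2 _ i hb, permLE_ge (h1.trans h2) π i hi]
      have : permLE h1 π ⟨(i : ℕ), hb⟩ = ⟨(i : ℕ), hb⟩ :=
        permLE_ge h1 π _ (by simpa using hi)
      rw [this]
    · rw [permLE_ge h2 _ i hb, permLE_ge (h1.trans h2) π i hi]

lemma permExtend_eq_permLE {n : ℕ} (π : Equiv.Perm (Fin n)) :
    permExtend π = permLE (Nat.le_succ n) π := by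
  ext i
  by_cases hi : (i : ℕ) < n
  · have key := Equiv.Perm.viaFintypeEmbedding_apply_image π Fin.castSuccEmb ⟨(i : ℕ), hi⟩
    have e : (Fin.castSuccEmb ⟨(i : ℕ), hi⟩ : Fin (n + 1)) = i := Fin.ext rfl
    rw [e] at key
    rw [permLE_lt (Nat.le_succ n) π i hi, permExtend, key]
    rfl
  · rw [permLE_ge (Nat.le_succ n) π i hi, permExtend,
      Equiv.Perm.viaFintypeEmbedding_apply_notMem_range]
    rintro ⟨j, hj⟩
    apply hi
    rw [← hj]
    exact j.2

lemma permLE_swap {a b : ℕ} (h : a ≤ b) (u v : Fin a) :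
    permLE h (Equiv.swap u v) = Equiv.swap (Fin.castLE h u) (Fin.castLE h v) := by
  ext i
  by_cases hi : (i : ℕ) < a
  · rw [permLE_lt h _ i hi, Equiv.swap_apply_def, Equiv.swap_apply_def]
    simp only [Fin.ext_iff, Fin.coe_castLE]
    split_ifs <;> simp_all
  · rw [permLE_ge h _ i hi, Equiv.swap_apply_def]
    have h1 : i ≠ Fin.castLE h u := by
      intro hh
      rw [hh] at hi
      exact hi (by simpa using u.2)
    have h2 : i ≠ Fin.castLE h v := by
      intro hh
      rw [hh] at hi
      exact hi (by simpa using v.2)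
    rw [if_neg h1, if_neg h2]

lemma permLE_swap_comm {n l : ℕ} (h : n ≤ l) (π : Equiv.Perm (Fin n)) (u v : Fin l)
    (hu : n ≤ (u : ℕ)) (hv : n ≤ (v : ℕ)) :
    permLE h π * Equiv.swap u v = Equiv.swap u v * permLE h π := by
  ext i
  rw [Equiv.Perm.mul_apply, Equiv.Perm.mul_apply]
  by_cases hi : (i : ℕ) < n
  · have hiu : i ≠ u := fun hh => by rw [hh] at hi; omega
    have hiv : i ≠ v := fun hh => by rw [hh] at hi; omega
    rw [Equiv.swap_apply_of_ne_of_ne hiu hiv]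
    have hlt : ((permLE h π i : Fin l) : ℕ) < n := by
      rw [permLE_coe_lt h π i hi]
      exact (π _).2
    have h1 : permLE h π i ≠ u := fun hh => by rw [hh] at hlt; omega
    have h2 : permLE h π i ≠ v := fun hh => by rw [hh] at hlt; omega
    rw [Equiv.swap_apply_of_ne_of_ne h1 h2]
  · rw [permLE_ge h π i hi]
    have hge : ¬ (((Equiv.swap u v) i : ℕ) : ℕ) < n := by
      rw [Equiv.swap_apply_def]
      split_ifs <;> omega
    rw [permLE_ge h π _ hge]

lemma permTwist_eq_swap (n : ℕ) :
    permTwist n = Equiv.swap (⟨n, by omega⟩ : Fin (n + 2)) ⟨n + 1, by omega⟩ := by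
  have h1 : (Fin.castSucc (Fin.last n) : Fin (n + 2)) = ⟨n, by omega⟩ := by
    apply Fin.ext
    rfl
  have h2 : (Fin.last (n + 1) : Fin (n + 2)) = ⟨n + 1, by omega⟩ := by
    apply Fin.ext
    rfl
  rw [permTwist, h1, h2]

lemma permLE_twist {n l : ℕ} (h : n + 2 ≤ l) :
    permLE h (permTwist n) = Equiv.swap (⟨n, by omega⟩ : Fin l) ⟨n + 1, by omega⟩ := by
  rw [permTwist_eq_swap, permLE_swap]
  congr 1 <;> (apply Fin.ext; rfl)


/-! ### Auxiliary: cube operations -/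

/-- Replace the value of an `ℕ`-indexed cube at one position. -/
def cubeSet {k : SimplexCategoryᵒᵖ} (c : ℕ → ICoord k) (n : ℕ) (s : ICoord k) :
    ℕ → ICoord k :=
  fun j => if j = n then s else c j

/-- Exchange the values of an `ℕ`-indexed cube at positions `i` and `i + 1`. -/
def cubeSwap {k : SimplexCategoryᵒᵖ} (i : ℕ) (c : ℕ → ICoord k) : ℕ → ICoord k :=
  fun j => if j = i then c (i + 1) else if j = i + 1 then c i else c j

/-- Postcomposition of a cube with a simplicial operator. -/
def cubeMap {k k' : SimplexCategoryᵒᵖ} (g : k ⟶ k') (c : ℕ → ICoord k) : ℕ → ICoord k' :=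
  fun i => g.unop ≫ c i

/-- A cube has a constant coordinate in the window `[n, l)`. -/
def CubeConst {k : SimplexCategoryᵒᵖ} (n l : ℕ) (c : ℕ → ICoord k) : Prop :=
  ∃ (i : ℕ) (v : Fin 2), n ≤ i ∧ i < l ∧ c i = iconst k v

lemma cubeMap_cubeSet {k k' : SimplexCategoryᵒᵖ} (g : k ⟶ k') (c : ℕ → ICoord k)
    (n : ℕ) (s : ICoord k) :
    cubeMap g (cubeSet c n s) = cubeSet (cubeMap g c) n (g.unop ≫ s) := by
  funext j
  simp only [cubeMap, cubeSet]
  split_ifs <;> rfl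

lemma cubeMap_cubeSwap {k k' : SimplexCategoryᵒᵖ} (g : k ⟶ k') (c : ℕ → ICoord k) (i : ℕ) :
    cubeMap g (cubeSwap i c) = cubeSwap i (cubeMap g c) := by
  funext j
  simp only [cubeMap, cubeSwap]
  split_ifs <;> rfl

lemma cubeSwap_cubeSet {k : SimplexCategoryᵒᵖ} (c : ℕ → ICoord k) (i n : ℕ) (s : ICoord k)
    (h1 : n ≠ i) (h2 : n ≠ i + 1) :
    cubeSwap i (cubeSet c n s) = cubeSet (cubeSwap i c) n s := by
  funext j
  simp only [cubeSwap, cubeSet]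
  split_ifs <;> first | rfl | omega

lemma cubeConst_cubeMap {k k' : SimplexCategoryᵒᵖ} (g : k ⟶ k') {n l : ℕ}
    {c : ℕ → ICoord k} (h : CubeConst n l c) : CubeConst n l (cubeMap g c) := by
  obtain ⟨i, v, h1, h2, h3⟩ := h
  exact ⟨i, v, h1, h2, by rw [cubeMap, h3, comp_const]⟩

lemma cubeConst_cubeSwap_iff {k : SimplexCategoryᵒᵖ} {n l i : ℕ} (c : ℕ → ICoord k)
    (hni : n ≤ i) (hil : i + 1 < l) :
    CubeConst n l (cubeSwap i c) ↔ CubeConst n l c := by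
  constructor
  · rintro ⟨j, v, h1, h2, h3⟩
    rw [cubeSwap] at h3
    by_cases hj1 : j = i
    · exact ⟨i + 1, v, by omega, by omega, by rw [← h3, if_pos hj1]⟩
    · by_cases hj2 : j = i + 1
      · exact ⟨i, v, by omega, by omega, by rw [← h3, if_neg hj1, if_pos hj2]⟩
      · exact ⟨j, v, h1, h2, by rw [← h3, if_neg hj1, if_neg hj2]⟩
  · rintro ⟨j, v, h1, h2, h3⟩
    by_cases hj1 : j = i
    · refine ⟨i + 1, v, by omega, by omega, ?_⟩
      rw [cubeSwap, if_neg (by omega), if_pos rfl, ← hj1, h3]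
    · by_cases hj2 : j = i + 1
      · refine ⟨i, v, by omega, by omega, ?_⟩
        rw [cubeSwap, if_pos rfl, ← hj2, h3]
      · refine ⟨j, v, h1, h2, ?_⟩
        rw [cubeSwap, if_neg hj1, if_neg hj2, h3]

/-! ### Auxiliary: iterated bonding maps -/

/-- Iterated bonding map of a symmetric spectrum along the coordinates of a cube. -/
noncomputable def iterL (Xs : SymSpectrum) {k : SimplexCategoryᵒᵖ} (c : ℕ → ICoord k) :
    (n l : ℕ) → n ≤ l → (Xs.lvl n).X.obj k → (Xs.lvl l).X.obj k := fun n l h x =>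
  match l, h with
  | 0, h => (Nat.le_zero.mp h) ▸ x
  | l + 1, h =>
    if hl : n = l + 1 then hl ▸ x
    else Xs.bond l k (iterL Xs c n l (by omega) x) (c l)

lemma iterL_self (Xs : SymSpectrum) {k : SimplexCategoryᵒᵖ} (c : ℕ → ICoord k) (n : ℕ)
    (h : n ≤ n) (x : (Xs.lvl n).X.obj k) : iterL Xs c n n h x = x := by
  cases n with
  | zero => rfl
  | succ l =>
    rw [iterL, dif_pos rfl]

lemma iterL_succ (Xs : SymSpectrum) {k : SimplexCategoryᵒᵖ} (c : ℕ → ICoord k) (n l : ℕ)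
    (h : n ≤ l) (h' : n ≤ l + 1) (x : (Xs.lvl n).X.obj k) :
    iterL Xs c n (l + 1) h' x = Xs.bond l k (iterL Xs c n l h x) (c l) := by
  rw [iterL, dif_neg (by omega)]


lemma permLE_refl {n : ℕ} (h : n ≤ n) (π : Equiv.Perm (Fin n)) : permLE h π = π := by
  ext i
  rw [permLE_lt h π i i.2]

lemma iterL_map (Xs : SymSpectrum) {k k' : SimplexCategoryᵒᵖ} (g : k ⟶ k')
    (c : ℕ → ICoord k) (n l : ℕ) (h : n ≤ l) (x : (Xs.lvl n).X.obj k) :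
    (Xs.lvl l).X.map g (iterL Xs c n l h x) =
      iterL Xs (cubeMap g c) n l h ((Xs.lvl n).X.map g x) := by
  induction l, h using Nat.le_induction with
  | base => rw [iterL_self, iterL_self]
  | succ l hl ih =>
    rw [iterL_succ Xs c n l hl, iterL_succ Xs (cubeMap g c) n l hl, Xs.bond_nat, ih]
    rfl

lemma iterL_pt (Xs : SymSpectrum) {k : SimplexCategoryᵒᵖ} (c : ℕ → ICoord k) (n l : ℕ)
    (h : n ≤ l) : iterL Xs c n l h ((Xs.lvl n).pt k) = (Xs.lvl l).pt k := by
  induction l, h using Nat.le_induction with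
  | base => rw [iterL_self]
  | succ l hl ih => rw [iterL_succ Xs c n l hl, ih, Xs.bond_pt]

lemma iterL_const (Xs : SymSpectrum) {k : SimplexCategoryᵒᵖ} (c : ℕ → ICoord k) (n l : ℕ)
    (h : n ≤ l) (x : (Xs.lvl n).X.obj k) (hc : CubeConst n l c) :
    iterL Xs c n l h x = (Xs.lvl l).pt k := by
  induction l, h using Nat.le_induction with
  | base =>
    obtain ⟨i, v, h1, h2, _⟩ := hc
    omega
  | succ l hl ih =>
    obtain ⟨i, v, h1, h2, h3⟩ := hc
    by_cases hi : i = l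
    · subst hi
      rw [iterL_succ Xs c n i hl, h3, Xs.bond_const]
    · rw [iterL_succ Xs c n l hl, ih ⟨i, v, h1, by omega, h3⟩, Xs.bond_pt]

lemma iterL_indep (Xs : SymSpectrum) {k : SimplexCategoryᵒᵖ} (c c' : ℕ → ICoord k)
    (n l : ℕ) (h : n ≤ l) (x : (Xs.lvl n).X.obj k)
    (hcc : ∀ i, n ≤ i → i < l → c i = c' i) :
    iterL Xs c n l h x = iterL Xs c' n l h x := by
  induction l, h using Nat.le_induction with
  | base => rw [iterL_self, iterL_self]
  | succ l hl ih =>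
    rw [iterL_succ Xs c n l hl, iterL_succ Xs c' n l hl,
      ih (fun i h1 h2 => hcc i h1 (by omega)), hcc l hl (by omega)]

lemma iterL_act (Xs : SymSpectrum) {k : SimplexCategoryᵒᵖ} (c : ℕ → ICoord k) (n l : ℕ)
    (h : n ≤ l) (π : Equiv.Perm (Fin n)) (x : (Xs.lvl n).X.obj k) :
    iterL Xs c n l h ((Xs.act n π).app k x) =
      (Xs.act l (permLE h π)).app k (iterL Xs c n l h x) := by
  induction l, h using Nat.le_induction with
  | base => rw [iterL_self, iterL_self, permLE_refl]
  | succ l hl ih =>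
    rw [iterL_succ Xs c n l hl, iterL_succ Xs c n l hl, ih, Xs.act_bond]
    congr 2
    rw [permExtend_eq_permLE, permLE_trans]

lemma iterL_bottom (Xs : SymSpectrum) {k : SimplexCategoryᵒᵖ} (c : ℕ → ICoord k) (n l : ℕ)
    (h : n + 1 ≤ l) (x : (Xs.lvl n).X.obj k) :
    iterL Xs c n l (by omega) x = iterL Xs c (n + 1) l h (Xs.bond n k x (c n)) := by
  induction l, h using Nat.le_induction with
  | base =>
    rw [iterL_self, iterL_succ Xs c n n (le_refl n), iterL_self]
  | succ l hl ih =>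
    rw [iterL_succ Xs c n l (by omega), iterL_succ Xs c (n + 1) l hl, ih]

lemma iterL_swap (Xs : SymSpectrum) {k : SimplexCategoryᵒᵖ} (c : ℕ → ICoord k) (n l : ℕ)
    (h : n ≤ l) (x : (Xs.lvl n).X.obj k) (i : ℕ) (h1 : n ≤ i) (h2 : i + 1 < l) :
    iterL Xs (cubeSwap i c) n l h x =
      (Xs.act l (Equiv.swap ⟨i, by omega⟩ ⟨i + 1, h2⟩)).app k (iterL Xs c n l h x) := by
  induction l, h using Nat.le_induction with
  | base => omega
  | succ l hl ih =>
    by_cases htop : i + 1 = l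
    · -- the swapped positions are the two topmost ones: use `bond_twist`
      subst htop
      have hil : n ≤ i := h1
      rw [iterL_succ Xs (cubeSwap i c) n (i + 1) (by omega),
        iterL_succ Xs c n (i + 1) (by omega),
        iterL_succ Xs (cubeSwap i c) n i hil, iterL_succ Xs c n i hil,
        iterL_indep Xs (cubeSwap i c) c n i hil x
          (fun j hj1 hj2 => by rw [cubeSwap, if_neg (by omega), if_neg (by omega)])]
      have e1 : cubeSwap i c i = c (i + 1) := by rw [cubeSwap, if_pos rfl]
      have e2 : cubeSwap i c (i + 1) = c i := by
        rw [cubeSwap, if_neg (by omega), if_pos rfl]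
      rw [e1, e2, Xs.bond_twist, permTwist_eq_swap]
    · -- the swapped positions lie strictly below the top one
      have h2' : i + 1 < l := by omega
      rw [iterL_succ Xs (cubeSwap i c) n l hl, iterL_succ Xs c n l hl, ih h2']
      have e3 : cubeSwap i c l = c l := by
        rw [cubeSwap, if_neg (by omega), if_neg (by omega)]
      rw [e3, Xs.act_bond]
      congr 2
      rw [permExtend_eq_permLE, permLE_swap]
      congr 1 <;> (apply Fin.ext; rfl)


/-! ### Auxiliary: a partial-map-classifier-style presheaf -/

/-- The partial map classifier of a simplicial set, encoded via `Option`-valued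
compatible families. -/
def PMC (Z : SSet.{0}) : SSet.{0} where
  obj k := {σ : ∀ (d : SimplexCategory), (d ⟶ k.unop) → Option (Z.obj (op d)) //
    ∀ (d d' : SimplexCategory) (h : d' ⟶ d) (g : d ⟶ k.unop) (x : Z.obj (op d)),
      σ d g = some x → σ d' (h ≫ g) = some (Z.map h.op x)}
  map {k k'} f := TypeCat.ofHom fun σ => ⟨fun d g => σ.1 d (g ≫ f.unop), by
    intro d d' h g x hx
    have := σ.2 d d' h (g ≫ f.unop) x hx
    rw [← Category.assoc] at this
    exact this⟩
  map_id k := by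
    ext σ : 3
    apply Subtype.ext
    funext d g
    simp
  map_comp {k k' k''} f f' := by
    ext σ : 3
    apply Subtype.ext
    funext d g
    simp

/-- The basepoint of the partial map classifier of a pointed simplicial set. -/
def pmcPt (P : PSSet) (k : SimplexCategoryᵒᵖ) : (PMC P.X).obj k :=
  ⟨fun d _ => some (P.pt (op d)), by
    intro d d' h g x hx
    obtain rfl : P.pt (op d) = x := Option.some_injective _ hx
    rw [P.pt_nat]⟩

/-- The canonical (monic) map from a pointed simplicial set into its partial map
classifier. -/
def pmcEta (P : PSSet) {k : SimplexCategoryᵒᵖ} (x : P.X.obj k) : (PMC P.X).obj k :=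
  ⟨fun d g => some (P.X.map g.op x), by
    intro d d' h g y hy
    obtain rfl : P.X.map g.op x = y := Option.some_injective _ hy
    rw [← FunctorToTypes.map_comp_apply]
    rfl⟩

lemma pmcPt_map (P : PSSet) {k k' : SimplexCategoryᵒᵖ} (f : k ⟶ k') :
    (PMC P.X).map f (pmcPt P k) = pmcPt P k' := by
  apply Subtype.ext
  rfl

lemma pmcEta_map (P : PSSet) {k k' : SimplexCategoryᵒᵖ} (f : k ⟶ k') (x : P.X.obj k) :
    (PMC P.X).map f (pmcEta P x) = pmcEta P (P.X.map f x) := by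
  apply Subtype.ext
  funext d g
  change some (P.X.map (g ≫ f.unop).op x) = some (P.X.map g.op (P.X.map f x))
  rw [← FunctorToTypes.map_comp_apply]
  rfl

lemma pmcEta_pt (P : PSSet) (k : SimplexCategoryᵒᵖ) :
    pmcEta P (P.pt k) = pmcPt P k := by
  apply Subtype.ext
  funext d g
  change some (P.X.map g.op (P.pt k)) = some (P.pt (op d))
  rw [P.pt_nat]

lemma pmcEta_injective (P : PSSet) (k : SimplexCategoryᵒᵖ) :
    Function.Injective (pmcEta P (k := k)) := by
  intro x y hxy
  have := congr_fun (congr_fun (congrArg Subtype.val hxy) k.unop) (𝟙 k.unop)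
  change some (P.X.map (𝟙 k.unop).op x) = some (P.X.map (𝟙 k.unop).op y) at this
  have h2 := Option.some_injective _ this
  have ex : ∀ z : P.X.obj k, P.X.map (𝟙 k.unop).op z = z := by
    intro z
    have : ((𝟙 k.unop).op : k ⟶ k) = 𝟙 k := rfl
    rw [this, FunctorToTypes.map_id_apply]
  rwa [ex, ex] at h2


/-! ### Auxiliary: the injective-level symmetric spectrum `Tilde Xs` -/

/-- The underlying families of the levels of `Tilde Xs`. -/
def TildeFam (Xs : SymSpectrum) (n : ℕ) (m : SimplexCategoryᵒᵖ) : Type :=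
  ∀ (l : ℕ), n ≤ l → ∀ (k : SimplexCategoryᵒᵖ), (k.unop ⟶ m.unop) → (ℕ → ICoord k) →
    Equiv.Perm (Fin l) → (PMC (Xs.lvl l).X).obj k

/-- The compatibility conditions defining the levels of `Tilde Xs`. -/
structure TildeCond (Xs : SymSpectrum) (n : ℕ) (m : SimplexCategoryᵒᵖ)
    (Φ : TildeFam Xs n m) : Prop where
  nat : ∀ l hl k k' (g : k ⟶ k') a c ρ,
    (PMC (Xs.lvl l).X).map g (Φ l hl k a c ρ) = Φ l hl k' (g.unop ≫ a) (cubeMap g c) ρ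
  indep : ∀ l hl k a c c' ρ, (∀ i, n ≤ i → i < l → c i = c' i) →
    Φ l hl k a c ρ = Φ l hl k a c' ρ
  coll : ∀ l hl k a c ρ, CubeConst n l c → Φ l hl k a c ρ = pmcPt (Xs.lvl l) k
  swap : ∀ l hl k a c ρ (i : ℕ), n ≤ i → ∀ (h2 : i + 1 < l),
    Φ l hl k a (cubeSwap i c) ρ =
      Φ l hl k a c (ρ * Equiv.swap ⟨i, by omega⟩ ⟨i + 1, h2⟩)

/-- The `n`-th level of `Tilde Xs`. -/
def TildeLvl (Xs : SymSpectrum) (n : ℕ) : PSSet where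
  X :=
    { obj := fun m => {Φ : TildeFam Xs n m // TildeCond Xs n m Φ}
      map := fun {m m'} g => TypeCat.ofHom fun Φ => ⟨fun l hl k a c ρ => Φ.1 l hl k (a ≫ g.unop) c ρ,
        { nat := fun l hl k k' g' a c ρ => by
            have := Φ.2.nat l hl k k' g' (a ≫ g.unop) c ρ
            rw [this, ← Category.assoc]
          indep := fun l hl k a c c' ρ hcc => Φ.2.indep l hl k _ c c' ρ hcc
          coll := fun l hl k a c ρ hc => Φ.2.coll l hl k _ c ρ hc
          swap := fun l hl k a c ρ i hi h2 => Φ.2.swap l hl k _ c ρ i hi h2 }⟩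
      map_id := fun m => by
        ext Φ : 3
        apply Subtype.ext
        funext l hl k a c ρ
        simp
      map_comp := fun {m m' m''} g g' => by
        ext Φ : 3
        apply Subtype.ext
        funext l hl k a c ρ
        simp }
  pt m := ⟨fun l hl k a c ρ => pmcPt (Xs.lvl l) k,
    { nat := fun l hl k k' g a c ρ => pmcPt_map (Xs.lvl l) g
      indep := fun _ _ _ _ _ _ _ _ => rfl
      coll := fun _ _ _ _ _ _ _ => rfl
      swap := fun _ _ _ _ _ _ _ _ _ => rfl }⟩
  pt_nat {m m'} g := by
    apply Subtype.ext
    rfl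

/-- The symmetric spectrum `Tilde Xs`: an "injective-level" spectrum receiving a
levelwise monic map from `Xs`. -/
noncomputable def tildeSpec (Xs : SymSpectrum) : SymSpectrum where
  lvl n := TildeLvl Xs n
  bond n m Φ t := ⟨fun l hl k a c ρ =>
      Φ.1 l (Nat.le_of_succ_le hl) k a (cubeSet c n (a ≫ t)) ρ,
    { nat := fun l hl k k' g a c ρ => by
        have := Φ.2.nat l (Nat.le_of_succ_le hl) k k' g a (cubeSet c n (a ≫ t)) ρ
        rw [this, cubeMap_cubeSet, Category.assoc]
      indep := fun l hl k a c c' ρ hcc => by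
        apply Φ.2.indep
        intro i hi1 hi2
        rw [cubeSet, cubeSet]
        by_cases hin : i = n
        · rw [if_pos hin, if_pos hin]
        · rw [if_neg hin, if_neg hin]
          exact hcc i (by omega) hi2
      coll := fun l hl k a c ρ hc => by
        apply Φ.2.coll
        obtain ⟨i, v, h1, h2, h3⟩ := hc
        exact ⟨i, v, by omega, h2, by rw [cubeSet, if_neg (by omega), h3]⟩
      swap := fun l hl k a c ρ i hi h2 => by
        rw [← cubeSwap_cubeSet c i n (a ≫ t) (by omega) (by omega)]
        exact Φ.2.swap l (Nat.le_of_succ_le hl) k a (cubeSet c n (a ≫ t)) ρ i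
          (by omega) h2 }⟩
  bond_nat n {m m'} g Φ t := by
    apply Subtype.ext
    funext l hl k a c ρ
    change Φ.1 l _ k (a ≫ g.unop) (cubeSet c n ((a ≫ g.unop) ≫ t)) ρ =
      Φ.1 l _ k (a ≫ g.unop) (cubeSet c n (a ≫ g.unop ≫ t)) ρ
    rw [Category.assoc]
  bond_pt n m t := by
    apply Subtype.ext
    rfl
  bond_const n m Φ v := by
    apply Subtype.ext
    funext l hl k a c ρ
    change Φ.1 l _ k a (cubeSet c n (a ≫ iconst m v)) ρ = pmcPt (Xs.lvl l) k
    apply Φ.2.coll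
    exact ⟨n, v, le_refl n, by omega, by rw [cubeSet, if_pos rfl, comp_const]⟩
  act n π :=
    { app := fun m => TypeCat.ofHom fun Φ => ⟨fun l hl k a c ρ => Φ.1 l hl k a c (ρ * permLE hl π),
        { nat := fun l hl k k' g a c ρ => Φ.2.nat l hl k k' g a c _
          indep := fun l hl k a c c' ρ hcc => Φ.2.indep l hl k a c c' _ hcc
          coll := fun l hl k a c ρ hc => Φ.2.coll l hl k a c _ hc
          swap := fun l hl k a c ρ i hi h2 => by
            rw [Φ.2.swap l hl k a c _ i hi h2, mul_assoc, mul_assoc]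
            exact congrArg (fun z => Φ.1 l hl k a c (ρ * z))
              (permLE_swap_comm hl π ⟨i, by omega⟩ ⟨i + 1, h2⟩
                (by exact hi) (by exact Nat.le_succ_of_le hi)) }⟩
      naturality := fun {m m'} g => by
        ext Φ : 3
        apply Subtype.ext
        rfl }
  act_one n := by
    apply NatTrans.ext
    funext m; ext Φ : 3
    apply Subtype.ext
    funext l hl k a c ρ
    change Φ.1 l hl k a c (ρ * permLE hl 1) = Φ.1 l hl k a c ρ
    rw [permLE_one, mul_one]
  act_mul n π ρ' := by
    apply NatTrans.ext
    funext m; ext Φ : 3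
    apply Subtype.ext
    funext l hl k a c ρ
    change Φ.1 l hl k a c (ρ * permLE hl (π * ρ')) =
      Φ.1 l hl k a c ((ρ * permLE hl π) * permLE hl ρ')
    rw [permLE_mul, mul_assoc]
  act_pt n π m := by
    apply Subtype.ext
    rfl
  act_bond n π m Φ t := by
    apply Subtype.ext
    funext l hl k a c ρ
    change Φ.1 l _ k a (cubeSet c n (a ≫ t)) (ρ * permLE (Nat.le_of_succ_le hl) π) =
      Φ.1 l _ k a (cubeSet c n (a ≫ t)) (ρ * permLE hl (permExtend π))
    congr 2
    rw [permExtend_eq_permLE, permLE_trans]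
  bond_twist n m Φ t u := by
    apply Subtype.ext
    funext l hl k a c ρ
    have hl2 : n + 2 ≤ l := hl
    change Φ.1 l _ k a (cubeSet (cubeSet c (n + 1) (a ≫ u)) n (a ≫ t)) ρ =
      Φ.1 l _ k a (cubeSet (cubeSet c (n + 1) (a ≫ t)) n (a ≫ u))
        (ρ * permLE hl (permTwist n))
    have key := Φ.2.swap l (by omega) k a
      (cubeSet (cubeSet c (n + 1) (a ≫ t)) n (a ≫ u)) ρ n (le_refl n) (by omega)
    have cubeeq : cubeSwap n (cubeSet (cubeSet c (n + 1) (a ≫ t)) n (a ≫ u)) =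
        cubeSet (cubeSet c (n + 1) (a ≫ u)) n (a ≫ t) := by
      funext j
      simp only [cubeSwap, cubeSet]
      split_ifs <;> first | rfl | omega
    rw [cubeeq] at key
    rw [key]
    congr 2
    rw [permLE_twist hl2]


lemma iterL_cubeSet (Xs : SymSpectrum) {k : SimplexCategoryᵒᵖ} (c : ℕ → ICoord k)
    (n l : ℕ) (h : n + 1 ≤ l) (s : ICoord k) (y : (Xs.lvl n).X.obj k) :
    iterL Xs (cubeSet c n s) n l (by omega) y =
      iterL Xs c (n + 1) l h (Xs.bond n k y s) := by
  rw [iterL_bottom Xs (cubeSet c n s) n l h y]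
  have e1 : cubeSet c n s n = s := by rw [cubeSet, if_pos rfl]
  rw [e1]
  apply iterL_indep
  intro i hi1 hi2
  rw [cubeSet, if_neg (by omega)]

/-- The canonical levelwise-monic map `Xs ⟶ tildeSpec Xs`. -/
noncomputable def tildeHom (Xs : SymSpectrum) : Xs ⟶ tildeSpec Xs where
  app n :=
    { app := fun m => TypeCat.ofHom fun x => ⟨fun l hl k a c ρ =>
        pmcEta (Xs.lvl l) ((Xs.act l ρ).app k (iterL Xs c n l hl ((Xs.lvl n).X.map a.op x))),
        { nat := fun l hl k k' g a c ρ => by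
            rw [pmcEta_map]
            apply congrArg
            have e1 : (Xs.lvl l).X.map g
                ((Xs.act l ρ).app k (iterL Xs c n l hl ((Xs.lvl n).X.map a.op x))) =
                (Xs.act l ρ).app k'
                  ((Xs.lvl l).X.map g (iterL Xs c n l hl ((Xs.lvl n).X.map a.op x))) :=
              (NatTrans.naturality_apply (Xs.act l ρ) g _).symm
            rw [e1, iterL_map]
            apply congrArg
            apply congrArg
            rw [← FunctorToTypes.map_comp_apply]
            rfl
          indep := fun l hl k a c c' ρ hcc => by
            rw [iterL_indep Xs c c' n l hl _ hcc]
          coll := fun l hl k a c ρ hc => by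
            rw [iterL_const Xs c n l hl _ hc, Xs.act_pt, pmcEta_pt]
          swap := fun l hl k a c ρ i hi h2 => by
            rw [iterL_swap Xs c n l hl _ i hi h2]
            apply congrArg
            exact (ConcreteCategory.congr_hom (NatTrans.congr_app
              (Xs.act_mul l ρ (Equiv.swap ⟨i, by omega⟩ ⟨i + 1, h2⟩)) k) _).symm }⟩
      naturality := fun {m m'} g => by
        ext x : 3
        apply Subtype.ext
        funext l hl k a c ρ
        change pmcEta (Xs.lvl l)
            ((Xs.act l ρ).app k (iterL Xs c n l hl ((Xs.lvl n).X.map a.op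
              ((Xs.lvl n).X.map g x)))) =
          pmcEta (Xs.lvl l)
            ((Xs.act l ρ).app k (iterL Xs c n l hl ((Xs.lvl n).X.map (a ≫ g.unop).op x)))
        rw [← FunctorToTypes.map_comp_apply]
        rfl }
  app_pt n m := by
    apply Subtype.ext
    funext l hl k a c ρ
    change pmcEta (Xs.lvl l)
        ((Xs.act l ρ).app k (iterL Xs c n l hl ((Xs.lvl n).X.map a.op ((Xs.lvl n).pt m)))) =
      pmcPt (Xs.lvl l) k
    rw [(Xs.lvl n).pt_nat, iterL_pt, Xs.act_pt, pmcEta_pt]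
  app_bond n m x t := by
    apply Subtype.ext
    funext l hl k a c ρ
    change pmcEta (Xs.lvl l)
        ((Xs.act l ρ).app k (iterL Xs c (n + 1) l hl
          ((Xs.lvl (n + 1)).X.map a.op (Xs.bond n m x t)))) =
      pmcEta (Xs.lvl l)
        ((Xs.act l ρ).app k (iterL Xs (cubeSet c n (a ≫ t)) n l (Nat.le_of_succ_le hl)
          ((Xs.lvl n).X.map a.op x)))
    rw [Xs.bond_nat, iterL_cubeSet Xs c n l hl]
    rfl
  app_act n π := by
    apply NatTrans.ext
    funext m; ext x : 3
    apply Subtype.ext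
    funext l hl k a c ρ
    change pmcEta (Xs.lvl l)
        ((Xs.act l ρ).app k (iterL Xs c n l hl ((Xs.lvl n).X.map a.op
          ((Xs.act n π).app m x)))) =
      pmcEta (Xs.lvl l)
        ((Xs.act l (ρ * permLE hl π)).app k (iterL Xs c n l hl ((Xs.lvl n).X.map a.op x)))
    have e1 : (Xs.lvl n).X.map a.op ((Xs.act n π).app m x) =
        (Xs.act n π).app k ((Xs.lvl n).X.map a.op x) :=
      (NatTrans.naturality_apply (Xs.act n π) a.op x).symm
    rw [e1, iterL_act]
    apply congrArg
    exact (ConcreteCategory.congr_hom (NatTrans.congr_app (Xs.act_mul l ρ (permLE hl π)) k) _).symm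

lemma tildeHom_injective (Xs : SymSpectrum) (n : ℕ) (m : SimplexCategoryᵒᵖ) :
    Function.Injective ((SymHom.app (tildeHom Xs) n).app m) := by
  intro x y hxy
  have h1 := congr_fun (congr_fun (congr_fun (congr_fun (congr_fun (congr_fun
    (congrArg Subtype.val hxy) n) (le_refl n)) m) (𝟙 m.unop)) (fun _ => iconst m 0)) 1
  change pmcEta (Xs.lvl n) ((Xs.act n 1).app m
      (iterL Xs _ n n (le_refl n) ((Xs.lvl n).X.map (𝟙 m.unop).op x))) =
    pmcEta (Xs.lvl n) ((Xs.act n 1).app m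
      (iterL Xs _ n n (le_refl n) ((Xs.lvl n).X.map (𝟙 m.unop).op y))) at h1
  rw [iterL_self, iterL_self, Xs.act_one] at h1
  have h2 := pmcEta_injective (Xs.lvl n) m h1
  change (Xs.lvl n).X.map (𝟙 m) x = (Xs.lvl n).X.map (𝟙 m) y at h2
  rwa [FunctorToTypes.map_id_apply, FunctorToTypes.map_id_apply] at h2


/-! ### Auxiliary: the terminal symmetric spectrum -/

/-- The terminal pointed simplicial set. -/
def ptPSSet : PSSet where
  X :=
    { obj := fun _ => PUnit
      map := fun _ => TypeCat.ofHom fun x => x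
      map_id := fun _ => rfl
      map_comp := fun _ _ => rfl }
  pt _ := PUnit.unit
  pt_nat _ := rfl

/-- The terminal symmetric spectrum. -/
def ptSpec : SymSpectrum where
  lvl _ := ptPSSet
  bond _ _ _ _ := PUnit.unit
  bond_nat := by intros; rfl
  bond_pt := by intros; rfl
  bond_const := by intros; rfl
  act _ _ := 𝟙 _
  act_one := by intros; rfl
  act_mul := by intros; rfl
  act_pt := by intros; rfl
  act_bond := by intros; rfl
  bond_twist := by intros; rfl

/-- The unique map from any symmetric spectrum to the terminal one. -/
def toPtSpec (Zs : SymSpectrum) : Zs ⟶ ptSpec where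
  app _ := { app := fun _ => TypeCat.ofHom fun _ => PUnit.unit, naturality := by intros; rfl }
  app_pt := by intros; rfl
  app_bond := by intros; rfl
  app_act := by intros; rfl

/-! ### Auxiliary: levels of `tildeSpec` have the extension property along boundaries -/

/-- The canonical boundary values used in the filler. -/
noncomputable def bVal {Xs : SymSpectrum} {n r : ℕ}
    (u : (∂Δ[r] : SSet.{0}) ⟶ (TildeLvl Xs n).X) (d : SimplexCategory)
    (b : d ⟶ SimplexCategory.mk r) (hb : ¬ Function.Surjective b.toOrderHom) :
    (TildeLvl Xs n).X.obj (op d) :=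
  u.app (op d) ⟨⟨b⟩, hb⟩

/-- Reindexing a component of an element of a level of `tildeSpec` to the canonical slot. -/
lemma famShift {Xs : SymSpectrum} {n : ℕ} {m : SimplexCategoryᵒᵖ}
    (Φ : (TildeLvl Xs n).X.obj m) (l : ℕ) (hl : n ≤ l) (k : SimplexCategoryᵒᵖ)
    (a : k.unop ⟶ m.unop) (c : ℕ → ICoord k) (ρ : Equiv.Perm (Fin l))
    (d : SimplexCategory) (g : d ⟶ k.unop) :
    ((Φ.1 l hl k a c ρ).1 d g : Option ((Xs.lvl l).X.obj (op d))) =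
      (Φ.1 l hl (op d) (g ≫ a) (cubeMap g.op c) ρ).1 d (𝟙 d) := by
  have e := Φ.2.nat l hl k (op d) g.op a c ρ
  have e2 := congr_fun (congr_fun (congrArg Subtype.val e) d) (𝟙 d)
  refine Eq.trans ?_ e2
  change (Φ.1 l hl k a c ρ).1 d g = (Φ.1 l hl k a c ρ).1 d (𝟙 d ≫ g)
  rw [Category.id_comp]

/-- Transport of the canonical boundary values along a simplicial operator. -/
lemma bVal_shift {Xs : SymSpectrum} {n r : ℕ}
    (u : (∂Δ[r] : SSet.{0}) ⟶ (TildeLvl Xs n).X) {m : SimplexCategoryᵒᵖ}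
    (β : (∂Δ[r] : SSet.{0}).obj m) {d : SimplexCategory} (w : d ⟶ m.unop)
    (hw : ¬ Function.Surjective (w ≫ (β.1.down : m.unop ⟶ SimplexCategory.mk r)).toOrderHom)
    (l : ℕ) (hl : n ≤ l) (c : ℕ → ICoord (op d)) (ρ : Equiv.Perm (Fin l)) :
    ((u.app m β).1 l hl (op d) w c ρ : (PMC (Xs.lvl l).X).obj (op d)) =
      (bVal u d (w ≫ β.1.down) hw).1 l hl (op d) (𝟙 d) c ρ := by
  have e := NatTrans.naturality_apply u w.op β
  change u.app (op d) ((∂Δ[r] : SSet.{0}).map w.op β) =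
    (TildeLvl Xs n).X.map w.op (u.app m β) at e
  have e2 : ((∂Δ[r] : SSet.{0}).map w.op β) = ⟨⟨w ≫ β.1.down⟩, hw⟩ := Subtype.ext rfl
  rw [e2] at e
  rw [bVal, e]
  change (u.app m β).1 l hl (op d) w c ρ = (u.app m β).1 l hl (op d) (𝟙 d ≫ w) c ρ
  rw [Category.id_comp]

open scoped Classical in
/-- The value function of the boundary filler. -/
noncomputable def fillCore {Xs : SymSpectrum} {n r : ℕ}
    (u : (∂Δ[r] : SSet.{0}) ⟶ (TildeLvl Xs n).X) (l : ℕ) (hl : n ≤ l)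
    (d : SimplexCategory) (b : d ⟶ SimplexCategory.mk r) (cc : ℕ → ICoord (op d))
    (ρ : Equiv.Perm (Fin l)) : Option ((Xs.lvl l).X.obj (op d)) :=
  if CubeConst n l cc then some ((Xs.lvl l).pt (op d))
  else if hb : Function.Surjective b.toOrderHom then none
  else ((bVal u d b hb).1 l hl (op d) (𝟙 d) cc ρ).1 d (𝟙 d)

lemma fillCore_eval {Xs : SymSpectrum} {n r : ℕ}
    (u : (∂Δ[r] : SSet.{0}) ⟶ (TildeLvl Xs n).X) (l : ℕ) (hl : n ≤ l)
    (d : SimplexCategory) (b : d ⟶ SimplexCategory.mk r)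
    (hb : ¬ Function.Surjective b.toOrderHom) (cc : ℕ → ICoord (op d))
    (ρ : Equiv.Perm (Fin l)) :
    fillCore u l hl d b cc ρ = ((bVal u d b hb).1 l hl (op d) (𝟙 d) cc ρ).1 d (𝟙 d) := by
  by_cases hcol : CubeConst n l cc
  · rw [fillCore, if_pos hcol, (bVal u d b hb).2.coll l hl (op d) (𝟙 d) cc ρ hcol]
    rfl
  · rw [fillCore, if_neg hcol, dif_neg hb]

lemma fillCore_down {Xs : SymSpectrum} {n r : ℕ}
    (u : (∂Δ[r] : SSet.{0}) ⟶ (TildeLvl Xs n).X) (l : ℕ) (hl : n ≤ l)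
    {d d' : SimplexCategory} (h : d' ⟶ d) (b : d ⟶ SimplexCategory.mk r)
    (cc : ℕ → ICoord (op d)) (ρ : Equiv.Perm (Fin l)) (x : (Xs.lvl l).X.obj (op d))
    (hx : fillCore u l hl d b cc ρ = some x) :
    fillCore u l hl d' (h ≫ b) (cubeMap h.op cc) ρ = some ((Xs.lvl l).X.map h.op x) := by
  by_cases hcol : CubeConst n l cc
  · rw [fillCore, if_pos hcol] at hx
    obtain rfl : (Xs.lvl l).pt (op d) = x := Option.some_injective _ hx
    rw [fillCore, if_pos (cubeConst_cubeMap h.op hcol), (Xs.lvl l).pt_nat]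
  · rw [fillCore, if_neg hcol] at hx
    by_cases hb : Function.Surjective b.toOrderHom
    · rw [dif_pos hb] at hx
      exact absurd hx (by simp)
    · rw [dif_neg hb] at hx
      -- the value comes from the boundary datum
      have hb' : ¬ Function.Surjective (h ≫ b).toOrderHom := by
        intro hs
        have hs' : Function.Surjective
            (⇑b.toOrderHom ∘ ⇑(SimplexCategory.Hom.toOrderHom h)) := hs
        exact hb hs'.of_comp
      -- inner down-closure of the PMC element
      have key := ((bVal u d b hb).1 l hl (op d) (𝟙 d) cc ρ).2 d d' h (𝟙 d) x hx
      rw [Category.comp_id] at key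
      -- shift of the canonical slot
      have shift := famShift (bVal u d b hb) l hl (op d) (𝟙 d) cc ρ d' h
      rw [Category.comp_id] at shift
      -- `bVal` is natural in the simplex
      have bnat : ((bVal u d b hb).1 l hl (op d') h (cubeMap h.op cc) ρ
            : (PMC (Xs.lvl l).X).obj (op d')) =
          (bVal u d' (h ≫ b) hb').1 l hl (op d') (𝟙 d') (cubeMap h.op cc) ρ := by
        have := bVal_shift u (m := op d) ⟨⟨b⟩, hb⟩ h hb' l hl (cubeMap h.op cc) ρ
        exact this
      by_cases hcol' : CubeConst n l (cubeMap h.op cc)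
      · rw [fillCore, if_pos hcol']
        have e := (bVal u d b hb).2.coll l hl (op d') h (cubeMap h.op cc) ρ hcol'
        rw [e] at shift
        rw [key] at shift
        change _ = some ((Xs.lvl l).pt (op d')) at shift
        rw [← shift]
      · rw [fillCore, if_neg hcol', dif_neg hb', ← bnat, ← shift, key]

lemma fillCore_coll {Xs : SymSpectrum} {n r : ℕ}
    (u : (∂Δ[r] : SSet.{0}) ⟶ (TildeLvl Xs n).X) (l : ℕ) (hl : n ≤ l)
    (d : SimplexCategory) (b : d ⟶ SimplexCategory.mk r) (cc : ℕ → ICoord (op d))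
    (ρ : Equiv.Perm (Fin l)) (hcol : CubeConst n l cc) :
    fillCore u l hl d b cc ρ = some ((Xs.lvl l).pt (op d)) := by
  rw [fillCore, if_pos hcol]

lemma fillCore_indep {Xs : SymSpectrum} {n r : ℕ}
    (u : (∂Δ[r] : SSet.{0}) ⟶ (TildeLvl Xs n).X) (l : ℕ) (hl : n ≤ l)
    (d : SimplexCategory) (b : d ⟶ SimplexCategory.mk r) (cc cc' : ℕ → ICoord (op d))
    (ρ : Equiv.Perm (Fin l)) (hcc : ∀ i, n ≤ i → i < l → cc i = cc' i) :
    fillCore u l hl d b cc ρ = fillCore u l hl d b cc' ρ := by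
  by_cases hcol : CubeConst n l cc
  · have hcol' : CubeConst n l cc' := by
      obtain ⟨i, v, h1, h2, h3⟩ := hcol
      exact ⟨i, v, h1, h2, by rw [← hcc i h1 h2, h3]⟩
    rw [fillCore_coll u l hl d b cc ρ hcol, fillCore_coll u l hl d b cc' ρ hcol']
  · have hcol' : ¬ CubeConst n l cc' := by
      intro hc
      obtain ⟨i, v, h1, h2, h3⟩ := hc
      exact hcol ⟨i, v, h1, h2, by rw [hcc i h1 h2, h3]⟩
    rw [fillCore, if_neg hcol, fillCore, if_neg hcol']
    by_cases hb : Function.Surjective b.toOrderHom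
    · rw [dif_pos hb, dif_pos hb]
    · rw [dif_neg hb, dif_neg hb,
        (bVal u d b hb).2.indep l hl (op d) (𝟙 d) cc cc' ρ hcc]

lemma fillCore_swap {Xs : SymSpectrum} {n r : ℕ}
    (u : (∂Δ[r] : SSet.{0}) ⟶ (TildeLvl Xs n).X) (l : ℕ) (hl : n ≤ l)
    (d : SimplexCategory) (b : d ⟶ SimplexCategory.mk r) (cc : ℕ → ICoord (op d))
    (ρ : Equiv.Perm (Fin l)) (i : ℕ) (hi : n ≤ i) (h2 : i + 1 < l) :
    fillCore u l hl d b (cubeSwap i cc) ρ =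
      fillCore u l hl d b cc (ρ * Equiv.swap ⟨i, by omega⟩ ⟨i + 1, h2⟩) := by
  by_cases hcol : CubeConst n l (cubeSwap i cc)
  · rw [fillCore_coll u l hl d b _ ρ hcol,
      fillCore_coll u l hl d b cc _ ((cubeConst_cubeSwap_iff cc hi h2).mp hcol)]
  · rw [fillCore, if_neg hcol, fillCore,
      if_neg (fun hc => hcol ((cubeConst_cubeSwap_iff cc hi h2).mpr hc))]
    by_cases hb : Function.Surjective b.toOrderHom
    · rw [dif_pos hb, dif_pos hb]
    · rw [dif_neg hb, dif_neg hb,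
        (bVal u d b hb).2.swap l hl (op d) (𝟙 d) cc ρ i hi h2]

open scoped Classical in
/-- The filler extending a map `∂Δ[r] ⟶ (TildeLvl Xs n).X` over the standard simplex. -/
noncomputable def fillLift {Xs : SymSpectrum} {n r : ℕ}
    (u : (∂Δ[r] : SSet.{0}) ⟶ (TildeLvl Xs n).X) : (Δ[r] : SSet.{0}) ⟶ (TildeLvl Xs n).X where
  app m := TypeCat.ofHom fun s => ⟨fun l hl k a c ρ =>
    ⟨fun d g => fillCore u l hl d ((g ≫ a) ≫ s.down) (cubeMap g.op c) ρ, by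
      intro d d' h g x hx
      have := fillCore_down u l hl h ((g ≫ a) ≫ s.down) (cubeMap g.op c) ρ x hx
      have eb : h ≫ (g ≫ a) ≫ s.down = (((h ≫ g) ≫ a) ≫ s.down) := by
        simp only [Category.assoc]
      have ec : cubeMap h.op (cubeMap g.op c) = cubeMap (h ≫ g).op c := by
        funext i
        change h ≫ g ≫ c i = (h ≫ g) ≫ c i
        rw [Category.assoc]
      rw [eb, ec] at this
      exact this⟩,
    { nat := fun l hl k k' g₀ a c ρ => by
        apply Subtype.ext
        funext d g
        change fillCore u l hl d (((g ≫ g₀.unop) ≫ a) ≫ s.down)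
            (cubeMap (g ≫ g₀.unop).op c) ρ = fillCore u l hl d
            ((g ≫ g₀.unop ≫ a) ≫ s.down) (cubeMap g.op (cubeMap g₀ c)) ρ
        have eb : ((g ≫ g₀.unop) ≫ a) ≫ s.down = (g ≫ g₀.unop ≫ a) ≫ s.down := by
          simp only [Category.assoc]
        have ec : cubeMap (g ≫ g₀.unop).op c = cubeMap g.op (cubeMap g₀ c) := by
          funext i
          change (g ≫ g₀.unop) ≫ c i = g ≫ g₀.unop ≫ c i
          rw [Category.assoc]
        rw [eb, ec]
      indep := fun l hl k a c c' ρ hcc => by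
        apply Subtype.ext
        funext d g
        apply fillCore_indep
        intro i h1 h2
        change g ≫ c i = g ≫ c' i
        rw [hcc i h1 h2]
      coll := fun l hl k a c ρ hc => by
        apply Subtype.ext
        funext d g
        exact fillCore_coll u l hl d _ _ ρ (cubeConst_cubeMap g.op hc)
      swap := fun l hl k a c ρ i hi h2 => by
        apply Subtype.ext
        funext d g
        change fillCore u l hl d ((g ≫ a) ≫ s.down) (cubeMap g.op (cubeSwap i c)) ρ =
          fillCore u l hl d ((g ≫ a) ≫ s.down) (cubeMap g.op c) _
        rw [cubeMap_cubeSwap]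
        exact fillCore_swap u l hl d _ _ ρ i hi h2 }⟩
  naturality {m m'} g₁ := by
    ext s : 3
    apply Subtype.ext
    funext l hl k a c ρ
    apply Subtype.ext
    funext d g
    change fillCore u l hl d ((g ≫ a) ≫ (g₁.unop ≫ s.down)) (cubeMap g.op c) ρ =
      fillCore u l hl d ((g ≫ a ≫ g₁.unop) ≫ s.down) (cubeMap g.op c) ρ
    have eb : (g ≫ a) ≫ g₁.unop ≫ s.down = (g ≫ a ≫ g₁.unop) ≫ s.down := by
      simp only [Category.assoc]
    rw [eb]


lemma fillLift_restrict {Xs : SymSpectrum} {n r : ℕ}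
    (u : (∂Δ[r] : SSet.{0}) ⟶ (TildeLvl Xs n).X) :
    (SSet.boundary r).ι ≫ fillLift u = u := by
  apply NatTrans.ext
  funext m; ext β : 3
  change (fillLift u).app m β.1 = u.app m β
  apply Subtype.ext
  funext l hl k a c ρ
  apply Subtype.ext
  funext d g
  change fillCore u l hl d ((g ≫ a) ≫ β.1.down) (cubeMap g.op c) ρ =
    ((u.app m β).1 l hl k a c ρ).1 d g
  have hb : ¬ Function.Surjective ((g ≫ a) ≫ β.1.down).toOrderHom := by
    intro hs
    have hs' : Function.Surjective
        (⇑β.1.down.toOrderHom ∘ ⇑(SimplexCategory.Hom.toOrderHom (g ≫ a))) := hs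
    exact β.2 hs'.of_comp
  rw [fillCore_eval u l hl d _ hb, famShift (u.app m β) l hl k a c ρ d g,
    bVal_shift u β (g ≫ a) hb l hl (cubeMap g.op c) ρ]

lemma tilde_trivFib (Xs : SymSpectrum) (n : ℕ) :
    TrivialKanFibration (SymHom.app (toPtSpec (tildeSpec Xs)) n) := by
  intro r
  constructor
  intro v w sq
  exact ⟨⟨⟨fillLift v, fillLift_restrict v, by
    apply NatTrans.ext
    funext m; ext x : 3
    rfl⟩⟩⟩

lemma tilde_levelTrivFib (Xs : SymSpectrum) :
    LevelTrivFib (Forget.map (toPtSpec (tildeSpec Xs))) :=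
  fun n => tilde_trivFib Xs n


/-- Every map of symmetric spectra belonging to `cof(F K)`, where `K` is
the set of generating trivial cofibrations of the stable model structure on sequential
spectra and `F` is the free symmetric spectrum functor (left adjoint to the forgetful
functor), is a levelwise monomorphism of simplicial sets. -/
theorem cofImage_is_levelwise_mono
    (msN : ModelStr SeqSpectrum) (hmsN : IsStableSeq msN)
    {ι : Type} {A B : ι → SeqSpectrum} (K : ∀ i, A i ⟶ B i) (hK : msN.GeneratesTrivCof K)
    (F : SeqSpectrum ⥤ SymSpectrum) (adj : F ⊣ Forget)
    {X Y : SymSpectrum} (f : X ⟶ Y) (hf : CofOfImage F K f) :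
    LevelMono (Forget.map f) := by
  -- the comparison map from `X` into a levelwise "injective" spectrum
  set p : tildeSpec X ⟶ ptSpec := toPtSpec (tildeSpec X) with hp
  have hfibU : msN.Fib (Forget.map p) :=
    ((hmsN.2.2 (Forget.map p)).mpr (tilde_levelTrivFib X)).1
  have hlift : ∀ i, HasLiftingProperty (F.map (K i)) p := by
    intro i
    rw [adj.hasLiftingProperty_iff]
    exact msN.lift_trivCof_fib (K i) (Forget.map p) (hK.1 i).1 (hK.1 i).2 hfibU
  haveI hLP : HasLiftingProperty f p := hf p hlift
  have sq : CommSq (tildeHom X) f p (toPtSpec Y) := ⟨by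
    apply SymHom.ext
    funext n
    apply NatTrans.ext
    funext m
    ext x : 3
    rfl⟩
  have hfac : f ≫ sq.lift = tildeHom X := sq.fac_left
  intro n m x y hxy
  apply tildeHom_injective X n m
  change (SymHom.app f n).app m x = (SymHom.app f n).app m y at hxy
  have e1 := ConcreteCategory.congr_hom (NatTrans.congr_app
    (congrArg (fun w : X ⟶ tildeSpec X => SymHom.app w n) hfac) m) x
  have e2 := ConcreteCategory.congr_hom (NatTrans.congr_app
    (congrArg (fun w : X ⟶ tildeSpec X => SymHom.app w n) hfac) m) y
  change (SymHom.app sq.lift n).app m ((SymHom.app f n).app m x) =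
    (SymHom.app (tildeHom X) n).app m x at e1
  change (SymHom.app sq.lift n).app m ((SymHom.app f n).app m y) =
    (SymHom.app (tildeHom X) n).app m y at e2
  rw [← e1, ← e2, hxy]

end SpectraFormal
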